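/- arXiv:1804.05637 — 5 statements merged into one kernel-verified Lean document; each statement's English description precedes it below -/
import Mathlib

section
/- Let M be a 3-connected matroid and let X and Y be 3-separating subsets of E(M). If |X ∩ Y| ≥ 2, then X ∪ Y is 3-separating; and if |E(M) − (X ∪ Y)| ≥ 2, then X ∩ Y is 3-separating. -/
open Set Matroid

variable {α β : Type*}

namespace NDP

/-- The rank of a set `X` in a matroid `M`: the largest cardinality of an
independent subset of `X` (intended for finite matroids). -/
noncomputable def rk (M : Matroid α) (X : Set α) : ℕ :=
  sSup {n : ℕ | ∃ I, M.Indep I ∧ I ⊆ X ∧ I.ncard = n}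

/-- The connectivity function `λ_M(X) = r(X) + r(E − X) − r(M)`, valued in `ℤ`. -/
noncomputable def lam (M : Matroid α) (X : Set α) : ℤ :=
  (rk M X : ℤ) + (rk M (M.E \ X) : ℤ) - (rk M M.E : ℤ)

/-- Deletion of a set of elements. -/
def delete (M : Matroid α) (D : Set α) : Matroid α := M ↾ (M.E \ D)

/-- Contraction of a set of elements, defined by duality. -/
def contract (M : Matroid α) (C : Set α) : Matroid α := (delete M✶ C)✶

/-- `X` is a `k`-separating set of `M`. -/
def Separating (M : Matroid α) (k : ℕ) (X : Set α) : Prop :=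
  X ⊆ M.E ∧ lam M X ≤ (k : ℤ) - 1

/-- `X` is exactly `k`-separating in `M`. -/
def ExactlySeparating (M : Matroid α) (k : ℕ) (X : Set α) : Prop :=
  X ⊆ M.E ∧ lam M X = (k : ℤ) - 1

/-- `(X, M.E \ X)` is a `k`-separation of `M`. -/
def IsKSeparation (M : Matroid α) (k : ℕ) (X : Set α) : Prop :=
  Separating M k X ∧ k ≤ X.ncard ∧ k ≤ (M.E \ X).ncard

/-- A matroid is connected if it has no 1-separations. -/
def Connected (M : Matroid α) : Prop := ∀ X, ¬ IsKSeparation M 1 X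

/-- A matroid is 3-connected if it has no k-separations for k < 3. -/
def ThreeConnected (M : Matroid α) : Prop := ∀ k < 3, ∀ X, ¬ IsKSeparation M k X

/-- A circuit: a minimal dependent set. -/
def Circuit (M : Matroid α) (C : Set α) : Prop :=
  C ⊆ M.E ∧ ¬ M.Indep C ∧ ∀ D, D ⊂ C → M.Indep D

def Cocircuit (M : Matroid α) (C : Set α) : Prop := Circuit M✶ C

def Triangle (M : Matroid α) (T : Set α) : Prop := Circuit M T ∧ T.ncard = 3

def Triad (M : Matroid α) (T : Set α) : Prop := Cocircuit M T ∧ T.ncard = 3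

/-- `N` is a minor of `M`. -/
def Minor (N M : Matroid α) : Prop := ∃ C D, N = delete (contract M C) D

/-- `M` has a minor isomorphic to `N`. -/
def IsoMinor (M : Matroid α) (N : Matroid β) : Prop :=
  ∃ (f : β → α) (hf : Set.InjOn f N.E), Minor (N.map f hf) M

/-- `X` is a set of representatives for the simplification of `M`:
one non-loop element from each parallel class. -/
def SimpRep (M : Matroid α) (X : Set α) : Prop :=
  X ⊆ M.E ∧ (∀ e ∈ X, M.Indep {e}) ∧
  (∀ e ∈ M.E, M.Indep {e} → ∃ f ∈ X, f ∈ M.closure {e}) ∧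
  (∀ f ∈ X, ∀ g ∈ X, f ∈ M.closure {g} → f = g)

/-- `si M` (the simplification of `M`) is a 3-connected matroid. -/
def SiThreeConnected (M : Matroid α) : Prop :=
  ∀ X, SimpRep M X → ThreeConnected (M ↾ X)

/-- `co M` (the cosimplification of `M`) is a 3-connected matroid. -/
def CoThreeConnected (M : Matroid α) : Prop := SiThreeConnected M✶

/-- The restriction of `M` to `P` is isomorphic to the rank-`r` uniform matroid on `P`. -/
def UnifRestr (M : Matroid α) (r : ℕ) (P : Set α) : Prop :=
  P ⊆ M.E ∧ ∀ X ⊆ P, (M.Indep X ↔ X.ncard ≤ r)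

/-- A set is fully closed if it is closed in `M` and in `M✶`. -/
def FullClosed (M : Matroid α) (F : Set α) : Prop :=
  M.closure F = F ∧ M✶.closure F = F

/-- The full closure of `X`: the intersection of all fully closed sets containing `X`. -/
def fcl (M : Matroid α) (X : Set α) : Set α :=
  ⋂₀ {F | X ⊆ F ∧ FullClosed M F}

/-- `(X, {z}, Y)` is a vertical 3-separation of `M`. -/
def VertThreeSep (M : Matroid α) (X : Set α) (z : α) (Y : Set α) : Prop :=
  X ∪ {z} ∪ Y = M.E ∧ Disjoint X Y ∧ z ∉ X ∧ z ∉ Y ∧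
  IsKSeparation M 3 (X ∪ {z}) ∧ 3 ≤ rk M (X ∪ {z}) ∧ 3 ≤ rk M Y ∧
  IsKSeparation M 3 X ∧ 3 ≤ rk M X ∧ 3 ≤ rk M (Y ∪ {z}) ∧
  z ∈ M.closure X ∧ z ∈ M.closure Y

/-- `M` is a wheel or a whirl: its ground set has a cyclic ordering of alternating
spokes and rims in which consecutive triples are alternately triangles and triads. -/
def IsWheelOrWhirl (M : Matroid α) : Prop :=
  ∃ (n : ℕ) (s r : ZMod n → α), 2 ≤ n ∧
    Function.Injective (fun p : ZMod n × Bool => if p.2 then s p.1 else r p.1) ∧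
    Set.range s ∪ Set.range r = M.E ∧
    ∀ i : ZMod n, Triangle M {s i, r i, s (i + 1)} ∧ Triad M {r i, s (i + 1), r (i + 1)}

/-- `f` (restricted to `{0, …, k−1}`) is a fan ordering of length `k` in `M`. -/
def IsFanOrd (M : Matroid α) (k : ℕ) (f : ℕ → α) : Prop :=
  3 ≤ k ∧ Set.InjOn f (Set.Iio k) ∧ (∀ i < k, f i ∈ M.E) ∧
  (Triangle M {f 0, f 1, f 2} ∨ Triad M {f 0, f 1, f 2}) ∧
  ∀ i, i + 3 < k →
    (Triangle M {f i, f (i+1), f (i+2)} → Triad M {f (i+1), f (i+2), f (i+3)}) ∧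
    (Triad M {f i, f (i+1), f (i+2)} → Triangle M {f (i+1), f (i+2), f (i+3)})

/-- `F` is a fan of `M`. -/
def IsFan (M : Matroid α) (F : Set α) : Prop :=
  ∃ k f, IsFanOrd M k f ∧ F = f '' Set.Iio k

/-- `F` is a maximal fan of `M`. -/
def IsMaximalFan (M : Matroid α) (F : Set α) : Prop :=
  IsFan M F ∧ ∀ F', IsFan M F' → F ⊆ F' → F' = F

end NDP


namespace NDP

variable {α : Type*} {M : Matroid α} {I J X Y : Set α}

lemma ncard_le_of_basis' [M.Finite] (hI : M.IsBasis' I X) (hJ : M.Indep J)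
    (hJX : J ⊆ X) : J.ncard ≤ I.ncard := by
  by_contra h
  push_neg at h
  have hlt : I.encard < J.encard := by
    rw [← (M.set_finite I hI.indep.subset_ground).cast_ncard_eq,
      ← (M.set_finite J hJ.subset_ground).cast_ncard_eq]
    exact_mod_cast h
  obtain ⟨e, he, hei⟩ := hI.indep.augment hJ hlt
  exact hI.insert_not_indep ⟨hJX he.1, he.2⟩ hei

lemma rk_eq_ncard_of_basis' [M.Finite] (hI : M.IsBasis' I X) : rk M X = I.ncard :=
  IsGreatest.csSup_eq ⟨⟨I, hI.indep, hI.subset, rfl⟩,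
    fun n ⟨J, hJ, hJX, hn⟩ => hn ▸ ncard_le_of_basis' hI hJ hJX⟩

lemma ncard_le_rk [M.Finite] (hJ : M.Indep J) (hJX : J ⊆ X) : J.ncard ≤ rk M X := by
  obtain ⟨I, hI⟩ := M.exists_isBasis' X
  rw [rk_eq_ncard_of_basis' hI]
  exact ncard_le_of_basis' hI hJ hJX

lemma rk_mono [M.Finite] (hXY : X ⊆ Y) : rk M X ≤ rk M Y := by
  obtain ⟨I, hI⟩ := M.exists_isBasis' X
  rw [rk_eq_ncard_of_basis' hI]
  exact ncard_le_rk hI.indep (hI.subset.trans hXY)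

lemma rk_le_ncard [M.Finite] (hX : X ⊆ M.E) : rk M X ≤ X.ncard := by
  obtain ⟨I, hI⟩ := M.exists_isBasis' X
  rw [rk_eq_ncard_of_basis' hI]
  exact ncard_le_ncard hI.subset (M.set_finite X hX)

lemma rk_submod (M : Matroid α) [M.Finite] (X Y : Set α) :
    rk M (X ∪ Y) + rk M (X ∩ Y) ≤ rk M X + rk M Y := by
  obtain ⟨I, hI⟩ := M.exists_isBasis' (X ∩ Y)
  obtain ⟨J, hJ, hIJ⟩ := hI.indep.subset_isBasis'_of_subset
    (hI.subset.trans (inter_subset_left.trans subset_union_left))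
  rw [rk_eq_ncard_of_basis' hI, rk_eq_ncard_of_basis' hJ]
  have hJfin : J.Finite := M.set_finite J hJ.indep.subset_ground
  have h1 : (J ∩ X).ncard + (J ∩ Y).ncard
      = ((J ∩ X) ∪ (J ∩ Y)).ncard + ((J ∩ X) ∩ (J ∩ Y)).ncard :=
    (ncard_union_add_ncard_inter _ _ (hJfin.subset inter_subset_left)
      (hJfin.subset inter_subset_left)).symm
  have h2 : (J ∩ X) ∪ (J ∩ Y) = J := by
    rw [← inter_union_distrib_left]
    exact inter_eq_left.2 hJ.subset
  have h3 : I.ncard ≤ ((J ∩ X) ∩ (J ∩ Y)).ncard := by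
    apply ncard_le_ncard _ (hJfin.subset (inter_subset_left.trans inter_subset_left))
    exact subset_inter (subset_inter hIJ (hI.subset.trans inter_subset_left))
      (subset_inter hIJ (hI.subset.trans inter_subset_right))
  have h4 : (J ∩ X).ncard ≤ rk M X := ncard_le_rk (hJ.indep.subset inter_subset_left)
    inter_subset_right
  have h5 : (J ∩ Y).ncard ≤ rk M Y := ncard_le_rk (hJ.indep.subset inter_subset_left)
    inter_subset_right
  rw [h2] at h1
  omega

lemma lam_submod (M : Matroid α) [M.Finite] (X Y : Set α) :
    lam M (X ∪ Y) + lam M (X ∩ Y) ≤ lam M X + lam M Y := by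
  have h1 := rk_submod M X Y
  have h2 := rk_submod M (M.E \ X) (M.E \ Y)
  rw [diff_inter_diff, ← diff_inter] at h2
  unfold lam
  push_cast
  linarith

end NDP


/-- Uncrossing of 3-separating sets in a 3-connected matroid. -/
theorem stmt2 (M : Matroid α) [M.Finite] (hM : NDP.ThreeConnected M)
    (X Y : Set α) (hX : NDP.Separating M 3 X) (hY : NDP.Separating M 3 Y) :
    (2 ≤ (X ∩ Y).ncard → NDP.Separating M 3 (X ∪ Y)) ∧
    (2 ≤ (M.E \ (X ∪ Y)).ncard → NDP.Separating M 3 (X ∩ Y)) := by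
  obtain ⟨hXE, hXl⟩ := hX
  obtain ⟨hYE, hYl⟩ := hY
  have hEfin := M.ground_finite
  have hsub := NDP.lam_submod M X Y
  have hiE : X ∩ Y ⊆ M.E := inter_subset_left.trans hXE
  have huE : X ∪ Y ⊆ M.E := union_subset hXE hYE
  have key : ∀ Z : Set α, Z ⊆ M.E → Z.ncard ≤ 1 → NDP.lam M Z ≤ 2 := by
    intro Z hZE hZ1
    have h1 : NDP.rk M Z ≤ 1 := le_trans (NDP.rk_le_ncard hZE) hZ1
    have h2 : NDP.rk M (M.E \ Z) ≤ NDP.rk M M.E := NDP.rk_mono diff_subset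
    unfold NDP.lam
    push_cast
    omega
  constructor
  · intro hcard
    refine ⟨huE, ?_⟩
    by_cases hc : 2 ≤ (M.E \ (X ∩ Y)).ncard
    · have h3 := hM 2 (by norm_num) (X ∩ Y)
      simp only [NDP.IsKSeparation, NDP.Separating, not_and, not_le] at h3
      have hli : 2 ≤ NDP.lam M (X ∩ Y) := by
        by_contra hlt
        push_neg at hlt
        exact absurd (h3 ⟨hiE, by push_cast; omega⟩ (by exact_mod_cast hcard)) (by simpa)
      show NDP.lam M (X ∪ Y) ≤ (3 : ℤ) - 1
      push_cast at hXl hYl ⊢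
      linarith
    · push_neg at hc
      have hsmall : (M.E \ (X ∪ Y)).ncard ≤ 1 := by
        have := ncard_le_ncard (diff_subset_diff_right ((inter_subset_left.trans subset_union_left : X ∩ Y ⊆ X ∪ Y)))
          (hEfin.diff)
        omega
      have h1 : NDP.rk M (X ∪ Y) ≤ NDP.rk M M.E := NDP.rk_mono huE
      have h2 : NDP.rk M (M.E \ (X ∪ Y)) ≤ 1 :=
        le_trans (NDP.rk_le_ncard diff_subset) hsmall
      show NDP.lam M (X ∪ Y) ≤ (3 : ℤ) - 1
      unfold NDP.lam
      push_cast
      omega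
  · intro hcard
    refine ⟨hiE, ?_⟩
    by_cases hc : 2 ≤ (X ∪ Y).ncard
    · have h3 := hM 2 (by norm_num) (X ∪ Y)
      simp only [NDP.IsKSeparation, NDP.Separating, not_and, not_le] at h3
      have hlu : 2 ≤ NDP.lam M (X ∪ Y) := by
        by_contra hlt
        push_neg at hlt
        exact absurd (h3 ⟨huE, by push_cast; omega⟩ (by exact_mod_cast hc)) (by simpa)
      show NDP.lam M (X ∩ Y) ≤ (3 : ℤ) - 1
      push_cast at hXl hYl ⊢
      linarith
    · push_neg at hc
      have hsmall : (X ∩ Y).ncard ≤ 1 := by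
        have := ncard_le_ncard ((inter_subset_left.trans subset_union_left : X ∩ Y ⊆ X ∪ Y)) (hEfin.subset huE)
        omega
      exact (key (X ∩ Y) hiE hsmall).trans_eq (by norm_num)
end

section
/- Let (X, Y) be an exactly 3-separating partition of a 3-connected matroid M with |X| ≥ 3 and x ∈ X. Then (X − x, Y ∪ x) is exactly 3-separating if and only if x lies in cl(X − x) ∩ cl(Y) or in cl*(X − x) ∩ cl*(Y). -/
open Set Matroid

variable {α β : Type*}

namespace NDPAux

open Set Matroid

variable {α : Type*} {M : Matroid α} {I X S : Set α} {x : α}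

lemma rk_eq_ncard_of_basis' [M.Finite] (hI : M.IsBasis' I X) :
    NDP.rk M X = I.ncard := by
  have hb : ∀ n ∈ {n : ℕ | ∃ J, M.Indep J ∧ J ⊆ X ∧ J.ncard = n}, n ≤ I.ncard := by
    rintro n ⟨J, hJ, hJX, rfl⟩
    obtain ⟨J', hJ', hJJ'⟩ := hJ.subset_isBasis'_of_subset hJX
    have he : J'.encard = I.encard := hJ'.encard_eq_encard hI
    have hJ'fin : J'.Finite := M.set_finite J' hJ'.indep.subset_ground
    calc J.ncard ≤ J'.ncard := Set.ncard_le_ncard hJJ' hJ'fin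
      _ = I.ncard := by rw [Set.ncard_def, he, ← Set.ncard_def]
  refine le_antisymm (csSup_le ⟨0, ∅, M.empty_indep, empty_subset X, Set.ncard_empty _⟩ hb) ?_
  exact le_csSup ⟨I.ncard, hb⟩ ⟨I, hI.indep, hI.subset, rfl⟩

lemma rk_insert_of_mem_closure [M.Finite] (hX : X ⊆ M.E) (hxcl : x ∈ M.closure X) :
    NDP.rk M (insert x X) = NDP.rk M X := by
  obtain ⟨I, hI⟩ := M.exists_isBasis X hX
  have hIb : M.IsBasis I (insert x X) := by
    refine hI.indep.isBasis_of_subset_of_subset_closure (hI.subset.trans (subset_insert _ _)) ?_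
    rw [hI.closure_eq_closure]
    exact insert_subset hxcl (M.subset_closure X hX)
  rw [rk_eq_ncard_of_basis' hIb.isBasis', rk_eq_ncard_of_basis' hI.isBasis']

lemma rk_insert_of_not_mem_closure [M.Finite] (hX : X ⊆ M.E) (hxE : x ∈ M.E)
    (hxcl : x ∉ M.closure X) : NDP.rk M (insert x X) = NDP.rk M X + 1 := by
  obtain ⟨I, hI⟩ := M.exists_isBasis X hX
  have hxI : x ∉ I := fun h => hxcl (M.subset_closure X hX (hI.subset h))
  have hxclI : x ∉ M.closure I := by rwa [hI.closure_eq_closure]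
  have hind : M.Indep (insert x I) :=
    (hI.indep.insert_indep_iff_of_notMem hxI).2 ⟨hxE, hxclI⟩
  have hIb : M.IsBasis (insert x I) (insert x X) := by
    refine hind.isBasis_of_subset_of_subset_closure
      (insert_subset_insert hI.subset) ?_
    refine insert_subset (M.mem_closure_of_mem (mem_insert _ _)
      (insert_subset hxE hI.indep.subset_ground)) ?_
    exact (hI.subset_closure).trans (M.closure_subset_closure (subset_insert _ _))
  rw [rk_eq_ncard_of_basis' hIb.isBasis', rk_eq_ncard_of_basis' hI.isBasis',
    Set.ncard_insert_of_notMem hxI (M.set_finite I hI.indep.subset_ground)]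

lemma mem_closure_iff_rk [M.Finite] (hX : X ⊆ M.E) (hxE : x ∈ M.E) :
    x ∈ M.closure X ↔ NDP.rk M (insert x X) = NDP.rk M X := by
  refine ⟨fun h => rk_insert_of_mem_closure hX h, fun h => ?_⟩
  by_contra hc
  rw [rk_insert_of_not_mem_closure hX hxE hc] at h
  omega

lemma rk_dual [M.Finite] (hS : S ⊆ M.E) :
    (NDP.rk M✶ S : ℤ) = S.ncard + NDP.rk M (M.E \ S) - NDP.rk M M.E := by
  obtain ⟨I, hI⟩ := M.exists_isBasis (M.E \ S) diff_subset
  obtain ⟨B, hB, hIB⟩ := hI.indep.exists_isBase_superset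
  have hBfin : B.Finite := M.set_finite B hB.subset_ground
  have hSfin : S.Finite := M.set_finite S hS
  have hIeq : I = B ∩ (M.E \ S) :=
    hI.eq_of_subset_indep (hB.indep.subset inter_subset_left)
      (subset_inter hIB hI.subset) inter_subset_right
  have hBX : M.IsBasis (B ∩ (M.E \ S)) (M.E \ S) := hIeq ▸ hI
  have hdual := hB.compl_inter_isBasis_of_inter_isBasis hBX
  rw [diff_diff_cancel_left hS] at hdual
  have hcompl : (M.E \ B) ∩ S = S \ B := by
    ext a; simp only [mem_inter_iff, mem_diff]
    exact ⟨fun h => ⟨h.2, h.1.2⟩, fun h => ⟨⟨hS h.1, h.2⟩, h.1⟩⟩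
  rw [hcompl] at hdual
  rw [rk_eq_ncard_of_basis' hdual.isBasis', rk_eq_ncard_of_basis' hBX.isBasis',
    rk_eq_ncard_of_basis' hB.isBasis_ground.isBasis']
  have h1 : (S ∩ B).ncard + (S \ B).ncard = S.ncard :=
    Set.ncard_inter_add_ncard_diff_eq_ncard S B hSfin
  have h2 : (B ∩ (M.E \ S)).ncard = (B \ S).ncard := by
    congr 1
    ext a; simp only [mem_inter_iff, mem_diff]
    exact ⟨fun h => ⟨h.1, h.2.2⟩, fun h => ⟨h.1, hB.subset_ground h.1, h.2⟩⟩
  have h3 : (B ∩ S).ncard + (B \ S).ncard = B.ncard :=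
    Set.ncard_inter_add_ncard_diff_eq_ncard B S hBfin
  have h4 : (S ∩ B).ncard = (B ∩ S).ncard := by rw [inter_comm]
  rw [h2]
  omega

end NDPAux



/-- With `(X, Y)` exactly 3-separating, `|X| ≥ 3`, `x ∈ X`:
`(X − x, Y ∪ x)` is exactly 3-separating iff `x ∈ cl(X−x) ∩ cl(Y)` or
`x ∈ cl*(X−x) ∩ cl*(Y)`. -/
theorem stmt6 (M : Matroid α) [M.Finite] (hM : NDP.ThreeConnected M)
    (X Y : Set α) (hXE : NDP.ExactlySeparating M 3 X) (hY : Y = M.E \ X)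
    (hcard : 3 ≤ X.ncard) (x : α) (hx : x ∈ X) :
    NDP.ExactlySeparating M 3 (X \ {x}) ↔
      (x ∈ M.closure (X \ {x}) ∩ M.closure Y ∨
       x ∈ M✶.closure (X \ {x}) ∩ M✶.closure Y) := by
  classical
  obtain ⟨hXsub, hlamX⟩ := hXE
  have hxE : x ∈ M.E := hXsub hx
  set A : Set α := X \ {x} with hA
  have hAsub : A ⊆ M.E := diff_subset.trans hXsub
  have hYsub : Y ⊆ M.E := by rw [hY]; exact diff_subset
  have hxA : x ∉ A := fun h => h.2 rfl
  have hxY : x ∉ Y := by rw [hY]; exact fun h => h.2 hx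
  have hXeq : insert x A = X := by
    rw [hA, insert_diff_singleton, insert_eq_self.2 hx]
  have hEA : M.E \ A = insert x Y := by
    rw [hY]; ext a
    simp only [mem_diff, mem_insert_iff, mem_singleton_iff, hA]
    constructor
    · rintro ⟨haE, ha⟩
      by_cases hax : a = x
      · exact Or.inl hax
      · exact Or.inr ⟨haE, fun h => ha ⟨h, hax⟩⟩
    · rintro (rfl | ⟨haE, ha⟩)
      · exact ⟨hxE, fun h => h.2 rfl⟩
      · exact ⟨haE, fun h => ha h.1⟩
  have hEY : M.E \ Y = X := by
    rw [hY, diff_diff_cancel_left hXsub]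
  have hEiY : M.E \ insert x Y = A := by
    rw [← hEA, diff_diff_cancel_left hAsub]
  have hiYsub : insert x Y ⊆ M.E := insert_subset hxE hYsub
  have hXfin : X.Finite := M.set_finite X hXsub
  have hYfin : Y.Finite := M.set_finite Y hYsub
  have hMd : M✶.Finite := ⟨M.ground_finite⟩
  have hcard1 : X.ncard = A.ncard + 1 := by
    rw [← hXeq, Set.ncard_insert_of_notMem hxA (hXfin.subset diff_subset)]
  have hcard2 : (insert x Y).ncard = Y.ncard + 1 := Set.ncard_insert_of_notMem hxY hYfin
  have hd1 : (NDP.rk M X : ℤ) = NDP.rk M A + (if x ∈ M.closure A then 0 else 1) := by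
    split_ifs with h
    · rw [← hXeq, NDPAux.rk_insert_of_mem_closure hAsub h]; ring
    · rw [← hXeq, NDPAux.rk_insert_of_not_mem_closure hAsub hxE h]; push_cast; ring
  have hd2 : (NDP.rk M (insert x Y) : ℤ) = NDP.rk M Y + (if x ∈ M.closure Y then 0 else 1) := by
    split_ifs with h
    · rw [NDPAux.rk_insert_of_mem_closure hYsub h]; ring
    · rw [NDPAux.rk_insert_of_not_mem_closure hYsub hxE h]; push_cast; ring
  have hstar1 : x ∈ M✶.closure A ↔ x ∉ M.closure Y := by
    rw [NDPAux.mem_closure_iff_rk (M := M✶) hAsub hxE, hXeq]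
    have e1 := NDPAux.rk_dual (M := M) hXsub
    have e2 := NDPAux.rk_dual (M := M) hAsub
    rw [← hY] at e1
    rw [hEA] at e2
    by_cases h : x ∈ M.closure Y
    · simp only [h, not_true, iff_false]
      have hr := NDPAux.rk_insert_of_mem_closure hYsub h
      intro heq
      have heq' : (NDP.rk M✶ X : ℤ) = NDP.rk M✶ A := by exact_mod_cast heq
      omega
    · simp only [h, not_false_iff, iff_true]
      have hr := NDPAux.rk_insert_of_not_mem_closure hYsub hxE h
      have heq' : (NDP.rk M✶ X : ℤ) = NDP.rk M✶ A := by omega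
      exact_mod_cast heq'
  have hstar2 : x ∈ M✶.closure Y ↔ x ∉ M.closure A := by
    rw [NDPAux.mem_closure_iff_rk (M := M✶) hYsub hxE]
    have e1 := NDPAux.rk_dual (M := M) hiYsub
    have e2 := NDPAux.rk_dual (M := M) hYsub
    rw [hEiY] at e1
    rw [hEY] at e2
    by_cases h : x ∈ M.closure A
    · simp only [h, not_true, iff_false]
      have hr := NDPAux.rk_insert_of_mem_closure hAsub h
      rw [hXeq] at hr
      intro heq
      have heq' : (NDP.rk M✶ (insert x Y) : ℤ) = NDP.rk M✶ Y := by exact_mod_cast heq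
      omega
    · simp only [h, not_false_iff, iff_true]
      have hr := NDPAux.rk_insert_of_not_mem_closure hAsub hxE h
      rw [hXeq] at hr
      have heq' : (NDP.rk M✶ (insert x Y) : ℤ) = NDP.rk M✶ Y := by omega
      exact_mod_cast heq'
  have hlamX' : (NDP.rk M X : ℤ) + NDP.rk M Y - NDP.rk M M.E = 2 := by
    rw [NDP.lam, ← hY] at hlamX
    push_cast at hlamX ⊢
    linarith
  have hlamA : NDP.lam M A = (NDP.rk M A : ℤ) + NDP.rk M (insert x Y) - NDP.rk M M.E := by
    rw [NDP.lam, hEA]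
  rw [hd1] at hlamX'
  constructor
  · rintro ⟨-, hl⟩
    rw [hlamA, hd2] at hl
    have hl' : (NDP.rk M A : ℤ) + NDP.rk M Y + (if x ∈ M.closure Y then 0 else 1)
        - NDP.rk M M.E = 2 := by push_cast at hl ⊢; linarith
    by_cases h1 : x ∈ M.closure A <;> by_cases h2 : x ∈ M.closure Y
    · exact Or.inl ⟨h1, h2⟩
    · exfalso
      rw [if_pos h1] at hlamX'; rw [if_neg h2] at hl'
      omega
    · exfalso
      rw [if_neg h1] at hlamX'; rw [if_pos h2] at hl'
      omega
    · exact Or.inr ⟨hstar1.2 h2, hstar2.2 h1⟩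
  · intro h
    refine ⟨hAsub, ?_⟩
    rw [hlamA, hd2]
    rcases h with ⟨h1, h2⟩ | ⟨h1, h2⟩
    · rw [if_pos h1] at hlamX'; rw [if_pos h2]
      push_cast at hlamX' ⊢; linarith
    · rw [hstar1] at h1; rw [hstar2] at h2
      rw [if_neg h2] at hlamX'; rw [if_neg h1]
      push_cast at hlamX' ⊢; linarith
end

section
/- Let S be a segment with at least four elements in a 3-connected matroid M (i.e., M|S ≅ U_{2,k} with k ≥ 4). Then for every s ∈ S, the matroid M \ s obtained by deleting s is 3-connected. -/
open Set Matroid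

variable {α β : Type*}

section Aux

open NDP Set

variable {α : Type*} {M : Matroid α} {X Y I J : Set α} {s : α}

private lemma ndp_rk_eq_basis' [M.Finite] (hI : M.IsBasis' I X) : NDP.rk M X = I.ncard := by
  have hub : ∀ n ∈ {n : ℕ | ∃ J, M.Indep J ∧ J ⊆ X ∧ J.ncard = n}, n ≤ I.ncard := by
    rintro n ⟨J, hJ, hJX, rfl⟩
    by_contra hlt
    push_neg at hlt
    have hIJ : I.encard < J.encard := by
      rw [← hI.indep.finite.cast_ncard_eq, ← hJ.finite.cast_ncard_eq]
      exact_mod_cast hlt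
    obtain ⟨e, he, hins⟩ := hI.indep.augment hJ hIJ
    have heq := hI.eq_of_subset_indep hins (Set.subset_insert _ _)
      (Set.insert_subset (hJX he.1) hI.subset)
    exact he.2 (heq ▸ Set.mem_insert e I)
  refine le_antisymm (csSup_le ⟨0, ∅, M.empty_indep, Set.empty_subset _, Set.ncard_empty _⟩ hub)
    (le_csSup ⟨I.ncard, hub⟩ ⟨I, hI.indep, hI.subset, rfl⟩)

private lemma ndp_rk_mono [M.Finite] (h : X ⊆ Y) : NDP.rk M X ≤ NDP.rk M Y := by
  obtain ⟨I, hI⟩ := M.exists_isBasis' X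
  obtain ⟨J, hJ⟩ := M.exists_isBasis' Y
  rw [ndp_rk_eq_basis' hI, ndp_rk_eq_basis' hJ]
  by_contra hlt
  push_neg at hlt
  have hIJ : J.encard < I.encard := by
    rw [← hI.indep.finite.cast_ncard_eq, ← hJ.indep.finite.cast_ncard_eq]
    exact_mod_cast hlt
  obtain ⟨e, he, hins⟩ := hJ.indep.augment hI.indep hIJ
  have heq := hJ.eq_of_subset_indep hins (Set.subset_insert _ _)
    (Set.insert_subset (h (hI.subset he.1)) hJ.subset)
  exact he.2 (heq ▸ Set.mem_insert e J)

private lemma ndp_rk_closure [M.Finite] : NDP.rk M (M.closure X) = NDP.rk M X := by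
  obtain ⟨I, hI⟩ := M.exists_isBasis' X
  rw [ndp_rk_eq_basis' hI, ndp_rk_eq_basis' hI.isBasis_closure_right.isBasis']

private lemma ndp_rk_insert_of_mem_closure [M.Finite] (hX : X ⊆ M.E)
    (hs : s ∈ M.closure X) : NDP.rk M (insert s X) = NDP.rk M X := by
  refine le_antisymm ?_ (ndp_rk_mono (Set.subset_insert _ _))
  have h1 : insert s X ⊆ M.closure X := Set.insert_subset hs (M.subset_closure X hX)
  calc NDP.rk M (insert s X) ≤ NDP.rk M (M.closure X) := ndp_rk_mono h1
    _ = NDP.rk M X := ndp_rk_closure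

private lemma ndp_rk_restrict {R : Set α} (hXR : X ⊆ R) :
    NDP.rk (M ↾ R) X = NDP.rk M X := by
  unfold NDP.rk
  congr 1
  ext n
  constructor
  · rintro ⟨I, hI, hIX, rfl⟩
    exact ⟨I, (Matroid.restrict_indep_iff.1 hI).1, hIX, rfl⟩
  · rintro ⟨I, hI, hIX, rfl⟩
    exact ⟨I, Matroid.restrict_indep_iff.2 ⟨hI, hIX.trans hXR⟩, hIX, rfl⟩

/-- Core lemma: a low-order separation of `M \ s` whose `X`-side contains two
elements of `S \ {s}` lifts to a separation of `M`, a contradiction. -/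
private lemma ndp_key (M : Matroid α) [M.Finite] (hM : NDP.ThreeConnected M)
    (S : Set α) (hS : NDP.UnifRestr M 2 S) (s : α) (hs : s ∈ S)
    (k : ℕ) (hk : k < 3) (X : Set α) (hXE : X ⊆ M.E \ {s})
    (h2 : 2 ≤ ((S \ {s}) ∩ X).ncard)
    (hlam : NDP.lam (NDP.delete M {s}) X ≤ (k : ℤ) - 1)
    (hcX : k ≤ X.ncard) (hcY : k ≤ ((M.E \ {s}) \ X).ncard) : False := by
  have hsE : s ∈ M.E := hS.1 hs
  have hXsub : X ⊆ M.E := hXE.trans Set.diff_subset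
  have hfin : ((S \ {s}) ∩ X).Finite :=
    (M.ground_finite.subset hXsub).subset Set.inter_subset_right
  obtain ⟨a, b, ha, hb, hab⟩ := (Set.one_lt_ncard_iff hfin).1 (by omega)
  have haS : a ∈ S := ha.1.1
  have hbS : b ∈ S := hb.1.1
  have hsnot : s ∉ ({a, b} : Set α) := by
    rintro (rfl | rfl)
    · exact ha.1.2 rfl
    · exact hb.1.2 rfl
  have hindep : M.Indep {a, b} := by
    rw [hS.2 _ (Set.pair_subset haS hbS), Set.ncard_pair hab]
  have hnotindep : ¬ M.Indep (insert s {a, b}) := by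
    rw [hS.2 _ (Set.insert_subset hs (Set.pair_subset haS hbS)),
      Set.ncard_insert_of_notMem hsnot (Set.toFinite _), Set.ncard_pair hab]
    omega
  have hscl : s ∈ M.closure {a, b} := by
    by_contra hcon
    exact hnotindep ((hindep.insert_indep_iff_of_notMem hsnot).2 ⟨hsE, hcon⟩)
  have hsclX : s ∈ M.closure X :=
    M.closure_subset_closure (Set.pair_subset ha.2 hb.2) hscl
  have hsclE : s ∈ M.closure (M.E \ {s}) := M.closure_subset_closure hXE hsclX
  -- rank facts
  have h1 : NDP.rk M (insert s X) = NDP.rk M X := ndp_rk_insert_of_mem_closure hXsub hsclX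
  have h2' : NDP.rk M M.E = NDP.rk M (M.E \ {s}) := by
    have hins : insert s (M.E \ {s}) = M.E := by
      rw [Set.insert_diff_singleton, Set.insert_eq_self.2 hsE]
    conv_lhs => rw [← hins]
    exact ndp_rk_insert_of_mem_closure Set.diff_subset hsclE
  have hYeq : M.E \ insert s X = (M.E \ {s}) \ X := by
    rw [Set.diff_diff, Set.singleton_union]
  -- translate hlam
  have hE' : (NDP.delete M {s}).E = M.E \ {s} := rfl
  have hlam' : (NDP.rk M X : ℤ) + (NDP.rk M ((M.E \ {s}) \ X) : ℤ)
      - (NDP.rk M (M.E \ {s}) : ℤ) ≤ (k : ℤ) - 1 := by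
    have e1 : NDP.rk (NDP.delete M {s}) X = NDP.rk M X := ndp_rk_restrict hXE
    have e2 : NDP.rk (NDP.delete M {s}) ((M.E \ {s}) \ X) = NDP.rk M ((M.E \ {s}) \ X) :=
      ndp_rk_restrict Set.diff_subset
    have e3 : NDP.rk (NDP.delete M {s}) (M.E \ {s}) = NDP.rk M (M.E \ {s}) :=
      ndp_rk_restrict subset_rfl
    unfold NDP.lam at hlam
    rw [hE'] at hlam
    rwa [e1, e2, e3] at hlam
  -- build the separation of M
  have hfinsX : (insert s X).Finite := (M.ground_finite.subset hXsub).insert s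
  have hsep : NDP.IsKSeparation M k (insert s X) := by
    refine ⟨⟨Set.insert_subset hsE hXsub, ?_⟩, ?_, ?_⟩
    · unfold NDP.lam
      rw [h1, hYeq, h2']
      linarith [hlam']
    · exact le_trans hcX (Set.ncard_le_ncard (Set.subset_insert _ _) hfinsX)
    · rwa [hYeq]
  exact hM k hk _ hsep

end Aux

/-- Deleting any element of a segment with at least four elements
in a 3-connected matroid preserves 3-connectedness. -/
theorem stmt8 (M : Matroid α) [M.Finite] (hM : NDP.ThreeConnected M)
    (S : Set α) (hS : NDP.UnifRestr M 2 S) (hcard : 4 ≤ S.ncard)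
    (s : α) (hs : s ∈ S) :
    NDP.ThreeConnected (NDP.delete M {s}) := by
  intro k hk X hsep
  obtain ⟨⟨hXE, hlam⟩, hcX, hcY⟩ := hsep
  have hE' : (NDP.delete M {s}).E = M.E \ {s} := rfl
  rw [hE'] at hXE hcY
  have hSE : S ⊆ M.E := hS.1
  have hSfin : S.Finite := M.ground_finite.subset hSE
  have hS3 : 3 ≤ (S \ {s}).ncard := by
    rw [Set.ncard_diff_singleton_of_mem hs]
    omega
  set Y := (M.E \ {s}) \ X with hYdef
  have hYE : Y ⊆ M.E \ {s} := Set.diff_subset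
  have hSsub : S \ {s} ⊆ M.E \ {s} := Set.diff_subset_diff_left hSE
  have hunion : ((S \ {s}) ∩ X) ∪ ((S \ {s}) ∩ Y) = S \ {s} := by
    rw [← Set.inter_union_distrib_left, Set.union_diff_cancel hXE,
      Set.inter_eq_self_of_subset_left hSsub]
  have hdisj : Disjoint ((S \ {s}) ∩ X) ((S \ {s}) ∩ Y) :=
    (Set.disjoint_sdiff_right.mono_left Set.inter_subset_right).mono_right
      Set.inter_subset_right
  have hfinX : ((S \ {s}) ∩ X).Finite := hSfin.subset (Set.inter_subset_left.trans Set.diff_subset)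
  have hfinY : ((S \ {s}) ∩ Y).Finite := hSfin.subset (Set.inter_subset_left.trans Set.diff_subset)
  have hsum : ((S \ {s}) ∩ X).ncard + ((S \ {s}) ∩ Y).ncard = (S \ {s}).ncard := by
    rw [← Set.ncard_union_eq hdisj hfinX hfinY, hunion]
  rcases le_or_gt 2 (((S \ {s}) ∩ X).ncard) with h2 | h2
  · exact ndp_key M hM S hS s hs k hk X hXE h2 hlam hcX hcY
  · have h2Y : 2 ≤ ((S \ {s}) ∩ Y).ncard := by omega
    have hXY : (M.E \ {s}) \ Y = X := by
      rw [hYdef]; exact Set.diff_diff_cancel_left hXE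
    have hlamY : NDP.lam (NDP.delete M {s}) Y ≤ (k : ℤ) - 1 := by
      unfold NDP.lam at hlam ⊢
      have hg : (NDP.delete M {s}).E = M.E \ {s} := rfl
      rw [hg] at hlam ⊢
      rw [← hYdef] at hlam
      rw [hXY]
      linarith
    refine ndp_key M hM S hS s hs k hk Y hYE h2Y hlamY ?_ ?_
    · exact hcY
    · rwa [hXY]
end

section
/- Let (X, Y) be a 3-separation of a 3-connected matroid M. If X ∩ cl(Y) ≠ ∅ and X ∩ cl*(Y) ≠ ∅, then |X ∩ cl(Y)| = 1 and |X ∩ cl*(Y)| = 1. -/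
open Set Matroid

variable {α β : Type*}

namespace NDPX
open NDP

variable {M : Matroid α} {I J X Y Z A B : Set α} {e c : α}

lemma indep_ncard_le_rk [M.Finite] (hJ : M.Indep J) (hJX : J ⊆ X) : J.ncard ≤ rk M X := by
  refine le_csSup ⟨M.E.ncard, ?_⟩ ⟨J, hJ, hJX, rfl⟩
  rintro n ⟨K, hK, -, rfl⟩
  exact ncard_le_ncard hK.subset_ground M.ground_finite

lemma rk_eq_ncard_basis' [M.Finite] (hI : M.IsBasis' I X) : rk M X = I.ncard := by
  refine le_antisymm (csSup_le ⟨0, ∅, M.empty_indep, empty_subset _, by simp⟩ ?_)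
    (indep_ncard_le_rk hI.indep hI.subset)
  rintro n ⟨J, hJ, hJX, rfl⟩
  by_contra hlt
  push_neg at hlt
  have hIf : I.Finite := M.set_finite I (hI.indep.subset_ground)
  have hJf : J.Finite := M.set_finite J hJ.subset_ground
  obtain ⟨x, hxJI, hxind⟩ := hI.indep.augment hJ (by
    rw [← hIf.cast_ncard_eq, ← hJf.cast_ncard_eq]
    exact_mod_cast hlt)
  have := hI.eq_of_subset_indep hxind (subset_insert _ _)
    (insert_subset (hJX hxJI.1) hI.subset)
  exact hxJI.2 (this ▸ mem_insert _ _)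

lemma rk_mono [M.Finite] (h : X ⊆ Y) : rk M X ≤ rk M Y := by
  obtain ⟨I, hI⟩ := M.exists_isBasis' X
  rw [rk_eq_ncard_basis' hI]
  exact indep_ncard_le_rk hI.indep (hI.subset.trans h)

lemma rk_le_ncard [M.Finite] (hX : X.Finite) : rk M X ≤ X.ncard := by
  obtain ⟨I, hI⟩ := M.exists_isBasis' X
  rw [rk_eq_ncard_basis' hI]
  exact ncard_le_ncard hI.subset hX

lemma rk_union_closure [M.Finite] (hY : Y ⊆ M.E) (hZ : Z ⊆ M.closure Y) :
    rk M (Y ∪ Z) = rk M Y := by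
  obtain ⟨I, hI'⟩ := M.exists_isBasis' Y
  have hI := hI'.isBasis hY
  have hZcl : Z ⊆ M.closure I := by rw [hI.closure_eq_closure]; exact hZ
  have hb : M.IsBasis I (Y ∪ Z) := hI.indep.isBasis_of_subset_of_subset_closure
    (hI.subset.trans subset_union_left)
    (union_subset hI.subset_closure hZcl)
  rw [rk_eq_ncard_basis' hb.isBasis', rk_eq_ncard_basis' hI']

lemma rk_insert_of_not_mem_closure [M.Finite] (hY : Y ⊆ M.E) (he : e ∈ M.E)
    (hecl : e ∉ M.closure Y) : rk M (insert e Y) = rk M Y + 1 := by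
  obtain ⟨I, hI'⟩ := M.exists_isBasis' Y
  have hI := hI'.isBasis hY
  have heI : e ∉ I := fun h => hecl (M.subset_closure Y hY (hI.subset h))
  have hecl' : e ∉ M.closure I := by rwa [hI.closure_eq_closure]
  have hind : M.Indep (insert e I) := by
    rw [hI.indep.insert_indep_iff_of_notMem heI]; exact ⟨he, hecl'⟩
  have hb : M.IsBasis (insert e I) (insert e Y) := hind.isBasis_of_subset_of_subset_closure
    (insert_subset_insert hI.subset)
    (insert_subset (M.mem_closure_of_mem (mem_insert _ _) (insert_subset he (by aesop_mat)))
      (hI.subset_closure.trans (M.closure_subset_closure (subset_insert _ _))))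
  rw [rk_eq_ncard_basis' hb.isBasis', rk_eq_ncard_basis' hI',
    ncard_insert_of_notMem heI (M.set_finite I hI.indep.subset_ground)]

lemma mem_closure_iff_rk [M.Finite] (hY : Y ⊆ M.E) (he : e ∈ M.E) :
    e ∈ M.closure Y ↔ rk M (insert e Y) = rk M Y := by
  constructor
  · intro h
    have := rk_union_closure (M := M) hY (Z := {e}) (by simpa using h)
    rwa [union_singleton] at this
  · intro h
    by_contra hcl
    rw [rk_insert_of_not_mem_closure hY he hcl] at h
    omega

lemma rk_submod [M.Finite] (A B : Set α) (hA : A ⊆ M.E) (hB : B ⊆ M.E) :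
    rk M (A ∪ B) + rk M (A ∩ B) ≤ rk M A + rk M B := by
  obtain ⟨I, hI⟩ := M.exists_isBasis' (A ∩ B)
  obtain ⟨J, hJ, hIJ⟩ := hI.indep.subset_isBasis'_of_subset
    (hI.subset.trans ((inter_subset_left).trans subset_union_left))
  have hJf : J.Finite := M.set_finite J hJ.indep.subset_ground
  have h1 : rk M (A ∪ B) = J.ncard := rk_eq_ncard_basis' hJ
  have h2 : rk M (A ∩ B) = I.ncard := rk_eq_ncard_basis' hI
  have h3 : (J ∩ A).ncard ≤ rk M A :=
    indep_ncard_le_rk (hJ.indep.subset inter_subset_left) inter_subset_right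
  have h4 : (J ∩ B).ncard ≤ rk M B :=
    indep_ncard_le_rk (hJ.indep.subset inter_subset_left) inter_subset_right
  have hcup : (J ∩ A) ∪ (J ∩ B) = J := by
    rw [← inter_union_distrib_left, inter_eq_left.2 hJ.subset]
  have hcap : (J ∩ A) ∩ (J ∩ B) = J ∩ (A ∩ B) := by
    ext x; simp [mem_inter_iff]; tauto
  have hcard := ncard_union_add_ncard_inter (J ∩ A) (J ∩ B)
    (hJf.subset inter_subset_left) (hJf.subset inter_subset_left)
  rw [hcup, hcap] at hcard
  have hIle : I.ncard ≤ (J ∩ (A ∩ B)).ncard :=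
    ncard_le_ncard (subset_inter hIJ hI.subset) (hJf.subset inter_subset_left)
  omega

lemma rk_dual [M.Finite] (hA : A ⊆ M.E) :
    rk M✶ A + rk M M.E = A.ncard + rk M (M.E \ A) := by
  have hEf : M.E.Finite := M.ground_finite
  have hAf : A.Finite := hEf.subset hA
  obtain ⟨I, hI⟩ := M.exists_isBasis' (M.E \ A)
  obtain ⟨J, hJ, hIJ⟩ := hI.indep.subset_isBasis'_of_subset (hI.subset.trans diff_subset)
  have hJbase : M.IsBase J := isBasis_ground_iff.mp (hJ.isBasis subset_rfl)
  have hJf : J.Finite := hEf.subset hJbase.subset_ground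
  have hIf : I.Finite := hJf.subset hIJ
  have hrkE : rk M M.E = J.ncard := rk_eq_ncard_basis' hJ
  have hrkI : rk M (M.E \ A) = I.ncard := rk_eq_ncard_basis' hI
  -- J ∩ (E \ A) = I
  have hJI : J ∩ (M.E \ A) = I := by
    refine (hI.eq_of_subset_indep (hJ.indep.subset inter_subset_left)
      (subset_inter hIJ hI.subset) inter_subset_right).symm
  -- lower bound : A \ J is dual independent
  have hDind : M✶.Indep (A \ J) := by
    rw [dual_indep_iff_exists']
    exact ⟨diff_subset.trans hA, J, hJbase, disjoint_sdiff_left⟩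
  have hlow : (A \ J).ncard ≤ rk M✶ A := indep_ncard_le_rk hDind diff_subset
  -- card bookkeeping : |A \ J| + |J| = |A| + |I|
  have hsplitJ : (J ∩ A).ncard + I.ncard = J.ncard := by
    rw [← hJI, ← ncard_union_eq (by
        exact Disjoint.mono inter_subset_right inter_subset_right disjoint_sdiff_right
        ) (hJf.subset inter_subset_left) (hJf.subset inter_subset_left)]
    congr 1
    rw [← inter_union_distrib_left, union_diff_cancel hA, inter_eq_left.2 hJbase.subset_ground]
  have hsplitA : (A \ J).ncard + (J ∩ A).ncard = A.ncard := by
    rw [← ncard_union_eq (disjoint_of_subset_right inter_subset_left disjoint_sdiff_left)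
      (hAf.subset diff_subset) (hJf.subset inter_subset_left)]
    congr 1
    rw [inter_comm, diff_union_inter]
  -- upper bound
  obtain ⟨K, hK⟩ := M✶.exists_isBasis' A
  have hrkdual : rk M✶ A = K.ncard := rk_eq_ncard_basis' hK
  obtain ⟨hKE, B', hB', hdisj⟩ := dual_indep_iff_exists'.mp hK.indep
  have hB'f : B'.Finite := hEf.subset hB'.subset_ground
  have hKf : K.Finite := hAf.subset hK.subset
  have hBcard : B'.ncard = J.ncard := by
    have := Matroid.IsBase.encard_eq_encard_of_isBase hB' hJbase
    rw [← hB'f.cast_ncard_eq, ← hJf.cast_ncard_eq] at this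
    exact_mod_cast this
  have hBEA : (B' ∩ (M.E \ A)).ncard ≤ I.ncard := by
    rw [← hrkI]
    exact indep_ncard_le_rk (hB'.indep.subset inter_subset_left) inter_subset_right
  have hBsplit : (B' ∩ A).ncard + (B' ∩ (M.E \ A)).ncard = B'.ncard := by
    rw [← ncard_union_eq (by
        exact Disjoint.mono inter_subset_right inter_subset_right disjoint_sdiff_right
      ) (hB'f.subset inter_subset_left) (hB'f.subset inter_subset_left), ← inter_union_distrib_left,
      union_diff_cancel hA, inter_eq_left.2 hB'.subset_ground]
  have hKA : K.ncard + (B' ∩ A).ncard ≤ A.ncard := by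
    rw [← ncard_union_eq (disjoint_of_subset_right inter_subset_left hdisj)
      hKf (hB'f.subset inter_subset_left)]
    exact ncard_le_ncard (union_subset hK.subset inter_subset_right) hAf
  omega

lemma rk_empty (M : Matroid α) [M.Finite] : rk M (∅ : Set α) = 0 :=
  Nat.le_zero.mp ((rk_le_ncard finite_empty).trans_eq (by simp))

lemma lam_dual [M.Finite] (hX : X ⊆ M.E) : lam M✶ X = lam M X := by
  have h1 := rk_dual (M := M) hX
  have h2 := rk_dual (M := M) (diff_subset (s := M.E) (t := X))
  have h3 := rk_dual (M := M) (subset_rfl (a := M.E))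
  rw [diff_diff_cancel_left hX] at h2
  rw [diff_self, rk_empty] at h3
  have hcard : X.ncard + (M.E \ X).ncard = M.E.ncard := by
    rw [add_comm]
    exact ncard_diff_add_ncard_of_subset hX M.ground_finite
  unfold lam
  rw [dual_ground]
  omega

lemma mem_dual_closure_iff_rk [M.Finite] (hX : X ⊆ M.E) (hc : c ∈ X) :
    c ∈ M✶.closure (M.E \ X) ↔ rk M (X \ {c}) + 1 = rk M X := by
  have hcE : c ∈ M.E := hX hc
  have hcY : c ∉ M.E \ X := fun h => h.2 hc
  have hYf : (M.E \ X).Finite := M.ground_finite.subset diff_subset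
  rw [mem_closure_iff_rk (M := M✶) (by rw [dual_ground]; exact diff_subset)
    (by rwa [dual_ground])]
  have h1 := rk_dual (M := M) (A := insert c (M.E \ X))
    (insert_subset hcE diff_subset)
  have h2 := rk_dual (M := M) (diff_subset (s := M.E) (t := X))
  rw [diff_diff_cancel_left hX] at h2
  have hcompl : M.E \ insert c (M.E \ X) = X \ {c} := by
    ext x
    simp only [mem_diff, mem_insert_iff, mem_singleton_iff, not_or]
    constructor
    · rintro ⟨hxE, hxc, hxX⟩
      exact ⟨by by_contra h; exact hxX ⟨hxE, h⟩, hxc⟩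
    · rintro ⟨hxX, hxc⟩
      exact ⟨hX hxX, hxc, fun h => h.2 hxX⟩
  rw [hcompl] at h1
  rw [ncard_insert_of_notMem hcY hYf] at h1
  omega

lemma key (M : Matroid α) [M.Finite] (hM : ThreeConnected M) {X : Set α}
    (hsep : IsKSeparation M 3 X) (h1 : (X ∩ M.closure (M.E \ X)).Nonempty)
    (h2 : (X ∩ M✶.closure (M.E \ X)).Nonempty) :
    (X ∩ M.closure (M.E \ X)).ncard = 1 := by
  obtain ⟨⟨hXE, hlam⟩, hX3, hY3⟩ := hsep
  set Y := M.E \ X with hYdef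
  have hYE : Y ⊆ M.E := diff_subset
  have hEf : M.E.Finite := M.ground_finite
  have hXf : X.Finite := hEf.subset hXE
  have hYf : Y.Finite := hEf.subset hYE
  have hrksum : rk M X + rk M Y ≤ rk M M.E + 2 := by
    unfold lam at hlam
    rw [← hYdef] at hlam
    omega
  -- the element c in the dual closure
  obtain ⟨c, hcX, hccl⟩ := h2
  have hcE : c ∈ M.E := hXE hcX
  have hcrk : rk M (X \ {c}) + 1 = rk M X := (mem_dual_closure_iff_rk hXE hcX).mp hccl
  -- c is not in cl(Y)
  have hcnotcl : c ∉ M.closure Y := by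
    intro h
    have hins : rk M (insert c Y) = rk M Y := (mem_closure_iff_rk hYE hcE).mp h
    refine hM 2 (by norm_num) (X \ {c}) ⟨⟨diff_subset.trans hXE, ?_⟩, ?_, ?_⟩
    · have hcompl : M.E \ (X \ {c}) = insert c Y := by
        ext x
        simp only [hYdef, mem_diff, mem_insert_iff, mem_singleton_iff, not_and, not_not]
        constructor
        · rintro ⟨hxE, hx⟩
          by_cases hxX : x ∈ X
          · exact Or.inl (hx hxX)
          · exact Or.inr ⟨hxE, hxX⟩
        · rintro (rfl | ⟨hxE, hxX⟩)
          · exact ⟨hcE, fun _ => rfl⟩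
          · exact ⟨hxE, fun h => absurd h hxX⟩
      unfold lam
      rw [hcompl, hins]
      push_cast
      omega
    · have : (X \ {c}).ncard = X.ncard - 1 := ncard_diff_singleton_of_mem hcX
      omega
    · have hsub : Y ⊆ M.E \ (X \ {c}) := fun x hx =>
        ⟨hx.1, fun hxX => absurd hxX.1 hx.2⟩
      have := ncard_le_ncard hsub (hEf.subset diff_subset)
      omega
  -- two distinct elements a b of X ∩ cl(Y), for contradiction
  by_contra hne
  have hSf : (X ∩ M.closure Y).Finite := hXf.subset inter_subset_left
  have hlt : 1 < (X ∩ M.closure Y).ncard := by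
    have := (ncard_pos hSf).mpr h1
    omega
  obtain ⟨a, b, ha, hb, hab⟩ := (one_lt_ncard_iff hSf).mp hlt
  obtain ⟨haX, hacl⟩ := ha
  obtain ⟨hbX, hbcl⟩ := hb
  have hac : a ≠ c := fun h => hcnotcl (h ▸ hacl)
  have hbc : b ≠ c := fun h => hcnotcl (h ▸ hbcl)
  -- rk {a,b} = 2
  have hab2 : 2 ≤ rk M ({a, b} : Set α) := by
    by_contra hr
    push_neg at hr
    refine hM 2 (by norm_num) {a, b} ⟨⟨?_, ?_⟩, ?_, ?_⟩
    · exact insert_subset (hXE haX) (singleton_subset_iff.2 (hXE hbX))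
    · have h1' : rk M (M.E \ {a, b}) ≤ rk M M.E := rk_mono diff_subset
      unfold lam
      push_cast
      omega
    · rw [ncard_pair hab]
    · have hsub : Y ⊆ M.E \ {a, b} := fun x hx =>
        ⟨hx.1, by rintro (rfl | rfl) <;> exact hx.2 (by assumption)⟩
      have := ncard_le_ncard hsub (hEf.subset diff_subset)
      omega
  -- rk (Y ∪ {a,b}) = rk Y
  have hYab : rk M (Y ∪ {a, b}) = rk M Y :=
    rk_union_closure hYE (by
      exact insert_subset hacl (singleton_subset_iff.2 hbcl))
  -- submodularity
  have hunion : (X \ {c}) ∪ (Y ∪ {a, b}) = M.E \ {c} := by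
    apply Subset.antisymm
    · refine union_subset (fun x hx => ⟨hXE hx.1, hx.2⟩) (union_subset ?_ ?_)
      · exact fun x hx => ⟨hx.1, fun h => hx.2 (h ▸ hcX)⟩
      · rintro x (rfl | rfl)
        · exact ⟨hXE haX, hac⟩
        · exact ⟨hXE hbX, hbc⟩
    · rintro x ⟨hxE, hxc⟩
      by_cases hxX : x ∈ X
      · exact Or.inl ⟨hxX, hxc⟩
      · exact Or.inr (Or.inl ⟨hxE, hxX⟩)
  have hinter : (X \ {c}) ∩ (Y ∪ {a, b}) = {a, b} := by
    apply Subset.antisymm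
    · rintro x ⟨⟨hxX, -⟩, (hxY | hxab)⟩
      · exact absurd hxX hxY.2
      · exact hxab
    · rintro x (rfl | rfl)
      · exact ⟨⟨haX, hac⟩, Or.inr (by left; rfl)⟩
      · exact ⟨⟨hbX, hbc⟩, Or.inr (by right; rfl)⟩
  have hsub := rk_submod (M := M) (X \ {c}) (Y ∪ {a, b})
    (diff_subset.trans hXE) (union_subset hYE
      (insert_subset (hXE haX) (singleton_subset_iff.2 (hXE hbX))))
  rw [hunion, hinter, hYab] at hsub
  -- c is a coloop-ish : lam {c} ≤ 0
  have hc1 : rk M ({c} : Set α) ≤ 1 := (rk_le_ncard (finite_singleton c)).trans_eq (by simp)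
  refine hM 1 (by norm_num) {c} ⟨⟨singleton_subset_iff.2 hcE, ?_⟩, ?_, ?_⟩
  · unfold lam
    push_cast
    omega
  · simp
  · have hsubY : Y ⊆ M.E \ {c} := fun x hx => ⟨hx.1, fun h => hx.2 (h ▸ hcX)⟩
    have := ncard_le_ncard hsubY (hEf.subset diff_subset)
    omega


end NDPX



/-- If `(X, Y)` is a 3-separation of a 3-connected matroid and both
`X ∩ cl(Y)` and `X ∩ cl*(Y)` are nonempty, then each has exactly one element. -/
theorem stmt9 (M : Matroid α) [M.Finite] (hM : NDP.ThreeConnected M)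
    (X Y : Set α) (hsep : NDP.IsKSeparation M 3 X) (hY : Y = M.E \ X)
    (h1 : (X ∩ M.closure Y).Nonempty) (h2 : (X ∩ M✶.closure Y).Nonempty) :
    (X ∩ M.closure Y).ncard = 1 ∧ (X ∩ M✶.closure Y).ncard = 1 := by
  subst hY
  have hXE : X ⊆ M.E := hsep.1.1
  constructor
  · exact NDPX.key M hM hsep h1 h2
  · have hM' : NDP.ThreeConnected M✶ := by
      intro k hk Z hZ
      obtain ⟨⟨hZE, hlamZ⟩, s1, s2⟩ := hZ
      rw [Matroid.dual_ground] at hZE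
      rw [NDPX.lam_dual hZE] at hlamZ
      rw [Matroid.dual_ground] at s2
      exact hM k hk Z ⟨⟨hZE, hlamZ⟩, s1, s2⟩
    have hsep' : NDP.IsKSeparation M✶ 3 X := by
      obtain ⟨⟨-, hlamX⟩, s1, s2⟩ := hsep
      exact ⟨⟨by rw [Matroid.dual_ground]; exact hXE,
        by rw [NDPX.lam_dual hXE]; exact hlamX⟩, s1,
        by rw [Matroid.dual_ground]; exact s2⟩
    have h1' : (X ∩ M✶.closure (M✶.E \ X)).Nonempty := by
      rw [Matroid.dual_ground]; exact h2
    have h2' : (X ∩ M✶✶.closure (M✶.E \ X)).Nonempty := by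
      rw [Matroid.dual_dual, Matroid.dual_ground]; exact h1
    have hres := NDPX.key M✶ hM' hsep' h1' h2'
    rwa [Matroid.dual_ground] at hres
end

section
/- Let C* be a rank-3 cocircuit of a 3-connected matroid M with r(M) ≥ 4. If there exists x ∈ C* such that x ∈ cl(C* − x), then co(M \ x), the cosimplification of M \ x, is 3-connected. -/
open Set Matroid

variable {α β : Type*}

section Helpers

variable {α β : Type*}

namespace NDP

lemma zero_mem_rkSet (M : Matroid α) (X : Set α) :
    0 ∈ {n : ℕ | ∃ I, M.Indep I ∧ I ⊆ X ∧ I.ncard = n} :=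
  ⟨∅, M.empty_indep, Set.empty_subset _, by simp⟩

lemma ncard_le_rk_s11 {M : Matroid α} (hE : M.E.Finite) {I X : Set α}
    (hI : M.Indep I) (hIX : I ⊆ X) : I.ncard ≤ NDP.rk M X := by
  refine le_csSup ⟨M.E.ncard, ?_⟩ ⟨I, hI, hIX, rfl⟩
  rintro n ⟨J, hJ, hJX, rfl⟩
  exact Set.ncard_le_ncard hJ.subset_ground hE

lemma rk_le {M : Matroid α} {X : Set α} {c : ℕ}
    (h : ∀ I, M.Indep I → I ⊆ X → I.ncard ≤ c) : NDP.rk M X ≤ c :=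
  csSup_le ⟨0, NDP.zero_mem_rkSet M X⟩ (by rintro n ⟨I, hI, hIX, rfl⟩; exact h I hI hIX)

lemma rk_exists (M : Matroid α) (hE : M.E.Finite) (X : Set α) :
    ∃ I, M.Indep I ∧ I ⊆ X ∧ I.ncard = NDP.rk M X := by
  have h := Nat.sSup_mem (s := {n : ℕ | ∃ I, M.Indep I ∧ I ⊆ X ∧ I.ncard = n})
    ⟨0, NDP.zero_mem_rkSet M X⟩ ⟨M.E.ncard, by
      rintro n ⟨J, hJ, hJX, rfl⟩
      exact Set.ncard_le_ncard hJ.subset_ground hE⟩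
  exact h

lemma rk_mono_s11 {M : Matroid α} (hE : M.E.Finite) {X Y : Set α} (hXY : X ⊆ Y) :
    NDP.rk M X ≤ NDP.rk M Y :=
  rk_le fun I hI hIX => ncard_le_rk_s11 hE hI (hIX.trans hXY)

lemma rk_le_ncard_s11 {M : Matroid α} (hE : M.E.Finite) {X : Set α} (hX : X.Finite) :
    NDP.rk M X ≤ X.ncard :=
  rk_le fun _ _ hIX => Set.ncard_le_ncard hIX hX

lemma rk_empty (M : Matroid α) : NDP.rk M ∅ = 0 :=
  Nat.le_zero.mp (rk_le fun I _ hI => by simp [Set.subset_empty_iff.mp hI])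

lemma rk_eq_of_basis {M : Matroid α} (hE : M.E.Finite) {J X : Set α}
    (hJ : M.IsBasis J X) : NDP.rk M X = J.ncard := by
  refine le_antisymm (rk_le fun I hI hIX => ?_) (ncard_le_rk_s11 hE hJ.indep hJ.subset)
  by_contra hlt
  push_neg at hlt
  have hJfin : J.Finite := hE.subset hJ.indep.subset_ground
  have hIfin : I.Finite := hE.subset hI.subset_ground
  have henc : J.encard < I.encard := by
    rw [← hJfin.cast_ncard_eq, ← hIfin.cast_ncard_eq]
    exact_mod_cast hlt
  obtain ⟨e, heIJ, hins⟩ := hJ.indep.augment hI henc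
  exact heIJ.2 (hJ.mem_of_insert_indep (hIX heIJ.1) hins)

lemma rk_closure_eq {M : Matroid α} (hE : M.E.Finite) {X : Set α} (hX : X ⊆ M.E) :
    NDP.rk M (M.closure X) = NDP.rk M X := by
  obtain ⟨J, hJ⟩ := M.exists_isBasis X hX
  rw [rk_eq_of_basis hE hJ.isBasis_closure_right, rk_eq_of_basis hE hJ]

lemma rk_le_of_subset_closure {M : Matroid α} (hE : M.E.Finite) {S T : Set α}
    (hT : T ⊆ M.E) (h : S ⊆ M.closure T) : NDP.rk M S ≤ NDP.rk M T :=
  (rk_mono_s11 hE h).trans (rk_closure_eq hE hT).le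

lemma rk_sandwich {M : Matroid α} (hE : M.E.Finite) {S W : Set α}
    (hS : S ⊆ M.E) (hSW : S ⊆ W) (hW : W ⊆ M.closure S) : NDP.rk M W = NDP.rk M S :=
  le_antisymm (rk_le_of_subset_closure hE hS hW) (rk_mono_s11 hE hSW)

lemma rk_union_le {M : Matroid α} (hE : M.E.Finite) (S T : Set α) :
    NDP.rk M (S ∪ T) ≤ NDP.rk M S + NDP.rk M T := by
  refine rk_le fun I hI hIX => ?_
  have h1 : (I ∩ S).ncard ≤ NDP.rk M S :=
    ncard_le_rk_s11 hE (hI.subset Set.inter_subset_left) Set.inter_subset_right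
  have h2 : (I \ S).ncard ≤ NDP.rk M T := by
    refine ncard_le_rk_s11 hE (hI.subset Set.diff_subset) fun e he => ?_
    rcases hIX he.1 with h | h
    · exact absurd h he.2
    · exact h
  have h3 := Set.ncard_inter_add_ncard_diff_eq_ncard I S (hE.subset hI.subset_ground)
  omega

lemma rk_insert_le {M : Matroid α} (hE : M.E.Finite) {S : Set α} (x : α) :
    NDP.rk M (insert x S) ≤ NDP.rk M S + 1 := by
  have h := rk_union_le hE {x} S
  have h1 : NDP.rk M {x} ≤ 1 := rk_le_ncard_s11 hE (Set.finite_singleton x) |>.trans (by simp)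
  rw [Set.singleton_union] at h
  omega

lemma rk_submod_s11 {M : Matroid α} (hE : M.E.Finite) {S T : Set α}
    (hS : S ⊆ M.E) (hT : T ⊆ M.E) :
    NDP.rk M (S ∪ T) + NDP.rk M (S ∩ T) ≤ NDP.rk M S + NDP.rk M T := by
  obtain ⟨J, hJ⟩ := M.exists_isBasis (S ∩ T) ((Set.inter_subset_left).trans hS)
  obtain ⟨K, hK, hJK⟩ := hJ.indep.subset_isBasis_of_subset
    (hJ.subset.trans ((Set.inter_subset_left).trans Set.subset_union_left))
    (Set.union_subset hS hT)
  have hKfin : K.Finite := hE.subset hK.indep.subset_ground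
  have hKST : K ∩ (S ∩ T) = J := by
    refine subset_antisymm (fun e he => ?_) (Set.subset_inter hJK hJ.subset)
    exact hJ.mem_of_insert_indep he.2 (hK.indep.subset (Set.insert_subset he.1 hJK))
  have hcount : K.ncard + J.ncard = (K ∩ S).ncard + (K ∩ T).ncard := by
    have hX : (K ∩ S) ∪ (K ∩ T) = K := by
      rw [← Set.inter_union_distrib_left]
      exact Set.inter_eq_self_of_subset_left hK.subset
    have hY : (K ∩ S) ∩ (K ∩ T) = J := by
      rw [← hKST]; ext e; simp; tauto
    have := Set.ncard_union_add_ncard_inter (K ∩ S) (K ∩ T)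
      (hKfin.subset Set.inter_subset_left) (hKfin.subset Set.inter_subset_left)
    rw [hX, hY] at this
    omega
  have h1 : (K ∩ S).ncard ≤ NDP.rk M S :=
    ncard_le_rk_s11 hE (hK.indep.subset Set.inter_subset_left) Set.inter_subset_right
  have h2 : (K ∩ T).ncard ≤ NDP.rk M T :=
    ncard_le_rk_s11 hE (hK.indep.subset Set.inter_subset_left) Set.inter_subset_right
  rw [rk_eq_of_basis hE hK, rk_eq_of_basis hE hJ]
  omega

lemma rk_insert_of_mem_closure {M : Matroid α} (hE : M.E.Finite) {S : Set α} {x : α}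
    (hS : S ⊆ M.E) (hx : x ∈ M.closure S) : NDP.rk M (insert x S) = NDP.rk M S :=
  rk_sandwich hE hS (Set.subset_insert x S)
    (Set.insert_subset hx (M.subset_closure S hS))

lemma subset_closure_of_rk_le {M : Matroid α} (hE : M.E.Finite) {J S : Set α}
    (hJ : M.Indep J) (hJS : J ⊆ S) (hS : S ⊆ M.E) (hcard : NDP.rk M S ≤ J.ncard) :
    S ⊆ M.closure J := by
  intro s hs
  by_contra hscl
  have hsJ : s ∉ J := fun h => hscl (M.mem_closure_of_mem h hJ.subset_ground)
  have hins : M.Indep (insert s J) :=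
    (hJ.insert_indep_iff_of_notMem hsJ).mpr ⟨hS hs, hscl⟩
  have hcard2 : (insert s J).ncard = J.ncard + 1 :=
    Set.ncard_insert_of_notMem hsJ (hE.subset hJ.subset_ground)
  have := ncard_le_rk_s11 hE hins (Set.insert_subset hs hJS)
  omega

lemma rk_restrict (M : Matroid α) {R S : Set α} (hSR : S ⊆ R) :
    NDP.rk (M ↾ R) S = NDP.rk M S := by
  unfold NDP.rk
  congr 1
  ext n
  constructor
  · rintro ⟨I, hI, hIS, rfl⟩
    exact ⟨I, (Matroid.restrict_indep_iff.mp hI).1, hIS, rfl⟩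
  · rintro ⟨I, hI, hIS, rfl⟩
    exact ⟨I, Matroid.restrict_indep_iff.mpr ⟨hI, hIS.trans hSR⟩, hIS, rfl⟩

lemma rk_dual_add {M : Matroid α} (hE : M.E.Finite) {W : Set α} (hW : W ⊆ M.E) :
    NDP.rk M✶ W + NDP.rk M M.E = W.ncard + NDP.rk M (M.E \ W) := by
  have hWfin : W.Finite := hE.subset hW
  -- lower bound
  obtain ⟨J, hJ⟩ := M.exists_isBasis (M.E \ W) Set.diff_subset
  obtain ⟨B, hB, hJB⟩ := hJ.indep.exists_isBase_superset
  have hBfin : B.Finite := hE.subset hB.subset_ground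
  have hBJ : B ∩ (M.E \ W) = J :=
    subset_antisymm (fun e he => hJ.mem_of_insert_indep he.2
      (hB.indep.subset (Set.insert_subset he.1 hJB))) (Set.subset_inter hJB hJ.subset)
  have hrkE : NDP.rk M M.E = B.ncard := rk_eq_of_basis hE (Matroid.isBasis_ground_iff.mpr hB)
  have hrkJ : NDP.rk M (M.E \ W) = J.ncard := rk_eq_of_basis hE hJ
  have hdualI : M✶.Indep (W \ B) :=
    Matroid.dual_indep_iff_exists'.mpr ⟨Set.diff_subset.trans hW, B, hB, Set.disjoint_sdiff_left⟩
  have hlow : W.ncard + J.ncard ≤ NDP.rk M✶ W + B.ncard := by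
    have h1 : (W \ B).ncard ≤ NDP.rk M✶ W :=
      ncard_le_rk_s11 (M := M✶) hE hdualI Set.diff_subset
    have h2 : (W ∩ B).ncard + (W \ B).ncard = W.ncard :=
      Set.ncard_inter_add_ncard_diff_eq_ncard W B hWfin
    have h3 : (B ∩ W).ncard + (B \ W).ncard = B.ncard :=
      Set.ncard_inter_add_ncard_diff_eq_ncard B W hBfin
    have h4 : B \ W = J := by
      rw [← hBJ]; ext e
      simp only [Set.mem_diff, Set.mem_inter_iff]
      exact ⟨fun h => ⟨h.1, hB.subset_ground h.1, h.2⟩, fun h => ⟨h.1, h.2.2⟩⟩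
    have h5 : (W ∩ B).ncard = (B ∩ W).ncard := by rw [Set.inter_comm]
    have h6 : (B \ W).ncard = J.ncard := by rw [h4]
    omega
  -- upper bound
  obtain ⟨I, hI, hIW, hIcard⟩ := rk_exists M✶ hE W
  obtain ⟨hIE, B', hB', hdisj⟩ := Matroid.dual_indep_iff_exists'.mp hI
  have hB'fin : B'.Finite := hE.subset hB'.subset_ground
  have hrkE' : NDP.rk M M.E = B'.ncard :=
    rk_eq_of_basis hE (Matroid.isBasis_ground_iff.mpr hB')
  have hup : I.ncard + B'.ncard ≤ W.ncard + NDP.rk M (M.E \ W) := by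
    have h1 : (B' \ W).ncard ≤ NDP.rk M (M.E \ W) :=
      ncard_le_rk_s11 hE (hB'.indep.subset Set.diff_subset)
        (Set.diff_subset_diff_left hB'.subset_ground)
    have h2 : (B' ∩ W).ncard + (B' \ W).ncard = B'.ncard :=
      Set.ncard_inter_add_ncard_diff_eq_ncard B' W hB'fin
    have h3 : (I ∪ (B' ∩ W)).ncard = I.ncard + (B' ∩ W).ncard :=
      Set.ncard_union_eq (Set.disjoint_of_subset_right Set.inter_subset_left hdisj)
        (hE.subset hIE) (hB'fin.subset Set.inter_subset_left)
    have h4 : (I ∪ (B' ∩ W)).ncard ≤ W.ncard :=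
      Set.ncard_le_ncard (Set.union_subset hIW Set.inter_subset_right) hWfin
    omega
  have hJle : J.ncard ≤ B.ncard := Set.ncard_le_ncard hJB hBfin
  omega

end NDP

end Helpers


section Helpers2
variable {α : Type*}

lemma NDP.lam_nonneg (M : Matroid α) (hE : M.E.Finite) (Y : Set α) :
    0 ≤ NDP.lam M Y := by
  have h : NDP.rk M M.E ≤ NDP.rk M Y + NDP.rk M (M.E \ Y) := by
    refine NDP.rk_le fun I hI hIE => ?_
    have h1 : (I ∩ Y).ncard ≤ NDP.rk M Y :=
      NDP.ncard_le_rk_s11 hE (hI.subset Set.inter_subset_left) Set.inter_subset_right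
    have h2 : (I \ Y).ncard ≤ NDP.rk M (M.E \ Y) :=
      NDP.ncard_le_rk_s11 hE (hI.subset Set.diff_subset) (Set.diff_subset_diff_left hIE)
    have h3 := Set.ncard_inter_add_ncard_diff_eq_ncard I Y (hE.subset hIE)
    omega
  unfold NDP.lam
  omega

end Helpers2


section CoreChain

variable {α : Type*}

/-- Rank-1 subsets of the ground set of a "simple" matroid are subsingletons. -/
lemma NDP.card_le_one_of_rk_le_one {M : Matroid α} (hEfin : M.E.Finite)
    (hpair : ∀ u ∈ M.E, ∀ v ∈ M.E, u ≠ v → NDP.rk M {u, v} = 2)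
    {S : Set α} (hS : S ⊆ M.E) (h1 : NDP.rk M S ≤ 1) : S.ncard ≤ 1 := by
  by_contra h2
  push_neg at h2
  obtain ⟨u, v, hu, hv, huv⟩ := (Set.one_lt_ncard_iff (hEfin.subset hS)).mp h2
  have hp := hpair u (hS hu) v (hS hv) huv
  have hle : NDP.rk M {u, v} ≤ NDP.rk M S :=
    NDP.rk_mono_s11 hEfin (Set.insert_subset hu (Set.singleton_subset_iff.mpr hv))
  omega

/-- The core rank-arithmetic contradiction. -/
lemma NDP.core_chain {M : Matroid α} (hEfin : M.E.Finite) {x : α} {A B Cx : Set α}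
    (hxE : x ∈ M.E)
    (hAE : A ⊆ M.E \ {x}) (hBeq : B = (M.E \ {x}) \ A)
    (hCxE : Cx ⊆ M.E \ {x})
    (hMlam : ∀ S : Set α, S ⊆ M.E → 2 ≤ S.ncard → 2 ≤ (M.E \ S).ncard →
      NDP.rk M M.E + 2 ≤ NDP.rk M S + NDP.rk M (M.E \ S))
    (hxcl : x ∈ M.closure Cx)
    (hrkCx : NDP.rk M Cx = 3)
    (hCB2 : NDP.rk M (B ∩ Cx) = 2)
    (hA12 : 2 ≤ ((A \ Cx)).ncard)
    (hexact : NDP.rk M A + NDP.rk M B = NDP.rk M M.E + 1)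
    (hBne : B.Nonempty)
    (hCAne : (A ∩ Cx).Nonempty)
    (hHCA : NDP.rk M ((M.E \ insert x Cx) ∪ (A ∩ Cx)) = NDP.rk M M.E)
    (hHrk : NDP.rk M (M.E \ insert x Cx) + 1 = NDP.rk M M.E) : False := by
  have hBE : B ⊆ M.E := by rw [hBeq]; exact Set.diff_subset.trans Set.diff_subset
  have hAE' : A ⊆ M.E := hAE.trans Set.diff_subset
  have hCxE' : Cx ⊆ M.E := hCxE.trans Set.diff_subset
  have hVE : B ∪ Cx ⊆ M.E := Set.union_subset hBE hCxE'
  have hxV : x ∈ M.closure (B ∪ Cx) :=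
    M.closure_subset_closure Set.subset_union_right hxcl
  have hVins : NDP.rk M (insert x (B ∪ Cx)) = NDP.rk M (B ∪ Cx) :=
    NDP.rk_insert_of_mem_closure hEfin hVE hxV
  have hiden : M.E \ insert x (B ∪ Cx) = A \ Cx := by
    rw [hBeq]
    ext e
    constructor
    · rintro ⟨heE, hne⟩
      have hnx : e ≠ x := fun h => hne (by simp [h])
      have hnB : e ∉ (M.E \ {x}) \ A := fun h => hne (Set.mem_insert_of_mem _ (Or.inl h))
      have hnC : e ∉ Cx := fun h => hne (Set.mem_insert_of_mem _ (Or.inr h))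
      have heA : e ∈ A := by
        by_contra h
        exact hnB ⟨⟨heE, hnx⟩, h⟩
      exact ⟨heA, hnC⟩
    · rintro ⟨heA, hnC⟩
      have h1 : e ∈ M.E \ {x} := hAE heA
      refine ⟨h1.1, ?_⟩
      rintro (rfl | hmem)
      · exact h1.2 rfl
      · rcases hmem with h | h
        · exact h.2 heA
        · exact hnC h
  have hsize1 : 2 ≤ (insert x (B ∪ Cx)).ncard := by
    obtain ⟨b, hb⟩ := hBne
    have hb' : b ∈ (M.E \ {x}) \ A := by rw [← hBeq]; exact hb
    have hbx : b ≠ x := fun h => hb'.1.2 (by simp [h])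
    have hsub : ({b, x} : Set α) ⊆ insert x (B ∪ Cx) := by
      intro e he
      rcases he with rfl | rfl
      · exact Set.mem_insert_of_mem _ (Or.inl hb)
      · exact Set.mem_insert _ _
    calc 2 = ({b, x} : Set α).ncard := (Set.ncard_pair hbx).symm
    _ ≤ _ := Set.ncard_le_ncard hsub ((hEfin.subset hVE).insert x)
  have h2 := hMlam (insert x (B ∪ Cx)) (Set.insert_subset hxE hVE) hsize1
    (by rw [hiden]; exact hA12)
  rw [hiden, hVins] at h2
  have hsub := NDP.rk_submod_s11 hEfin hBE hCxE'
  rw [hCB2, hrkCx] at hsub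
  have hA1le : NDP.rk M (A \ Cx) ≤ NDP.rk M A := NDP.rk_mono_s11 hEfin Set.diff_subset
  obtain ⟨J, hJ⟩ := M.exists_isBasis (A \ Cx) (Set.diff_subset.trans hAE')
  have hJcard : NDP.rk M (A \ Cx) = J.ncard := NDP.rk_eq_of_basis hEfin hJ
  have hJA : A ⊆ M.closure J := by
    refine NDP.subset_closure_of_rk_le hEfin hJ.indep (hJ.subset.trans Set.diff_subset)
      hAE' ?_
    omega
  have hsubH : M.closure J ⊆ M.closure (M.E \ insert x Cx) := by
    refine M.closure_subset_closure ?_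
    intro e he
    have heA : e ∈ A \ Cx := hJ.subset he
    obtain ⟨heE, hnx⟩ := hAE heA.1
    refine ⟨heE, ?_⟩
    rintro (rfl | h)
    · exact hnx rfl
    · exact heA.2 h
  have hfin : NDP.rk M ((M.E \ insert x Cx) ∪ (A ∩ Cx)) ≤ NDP.rk M (M.E \ insert x Cx) := by
    refine NDP.rk_le_of_subset_closure hEfin Set.diff_subset
      (Set.union_subset (M.subset_closure _ Set.diff_subset) ?_)
    intro e he
    exact hsubH (hJA he.1)
  omega

end CoreChain

set_option maxHeartbeats 1000000 in
/-- If `C*` is a rank-3 cocircuit of a 3-connected matroid `M` with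
`r(M) ≥ 4` and `x ∈ C*` satisfies `x ∈ cl(C* − x)`, then `co(M \ x)` is 3-connected. -/
theorem stmt11 (M : Matroid α) [M.Finite] (hM : NDP.ThreeConnected M)
    (hr : 4 ≤ NDP.rk M M.E) (C : Set α) (hC : NDP.Cocircuit M C)
    (hrC : NDP.rk M C = 3) (x : α) (hx : x ∈ C)
    (hcl : x ∈ M.closure (C \ {x})) :
    NDP.CoThreeConnected (NDP.delete M {x}) := by
  classical
  intro X hX k hk Y hY
  set P : Matroid α := (NDP.delete M {x})✶ ↾ X with hP
  set D : Matroid α := (NDP.delete M {x})✶ with hD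
  have hEfin : M.E.Finite := M.ground_finite
  have hCE : C ⊆ M.E := hC.1
  have hxE : x ∈ M.E := hCE hx
  have hDEfin : D.E.Finite := hEfin.subset Set.diff_subset
  have hXD : X ⊆ M.E \ {x} := hX.1
  have hXE : X ⊆ M.E := fun a ha => (hXD ha).1
  have hPE : P.E = X := rfl
  -- global facts from 3-connectivity
  have hE4 : 4 ≤ M.E.ncard := le_trans hr (NDP.rk_le_ncard_s11 hEfin hEfin)
  have hMlam2 : ∀ S : Set α, S ⊆ M.E → 2 ≤ S.ncard → 2 ≤ (M.E \ S).ncard →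
      NDP.rk M M.E + 2 ≤ NDP.rk M S + NDP.rk M (M.E \ S) := by
    intro S h1 h2 h3
    by_contra hcon
    push_neg at hcon
    refine hM 2 (by norm_num) S ⟨⟨h1, ?_⟩, h2, h3⟩
    unfold NDP.lam
    omega
  have hMlam1 : ∀ S : Set α, S ⊆ M.E → 1 ≤ S.ncard → 1 ≤ (M.E \ S).ncard →
      NDP.rk M M.E + 1 ≤ NDP.rk M S + NDP.rk M (M.E \ S) := by
    intro S h1 h2 h3
    by_contra hcon
    push_neg at hcon
    refine hM 1 (by norm_num) S ⟨⟨h1, ?_⟩, h2, h3⟩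
    unfold NDP.lam
    omega
  have hnoloop : ∀ e ∈ M.E, NDP.rk M {e} = 1 := by
    intro e he
    have hle : NDP.rk M {e} ≤ 1 := by
      have h := NDP.rk_le_ncard_s11 hEfin (Set.finite_singleton e)
      simpa using h
    have h2 : 1 ≤ (M.E \ {e}).ncard := by
      have hd := Set.ncard_diff_add_ncard_of_subset (Set.singleton_subset_iff.mpr he) hEfin
      rw [Set.ncard_singleton] at hd
      omega
    have h3 := hMlam1 {e} (Set.singleton_subset_iff.mpr he) (by simp) h2
    have h4 : NDP.rk M (M.E \ {e}) ≤ NDP.rk M M.E := NDP.rk_mono_s11 hEfin Set.diff_subset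
    omega
  have hpair : ∀ u ∈ M.E, ∀ v ∈ M.E, u ≠ v → NDP.rk M {u, v} = 2 := by
    intro u hu v hv huv
    have hsub : ({u, v} : Set α) ⊆ M.E :=
      Set.insert_subset hu (Set.singleton_subset_iff.mpr hv)
    have hle : NDP.rk M {u, v} ≤ 2 := by
      have h := NDP.rk_le_ncard_s11 hEfin (hEfin.subset hsub)
      rwa [Set.ncard_pair huv] at h
    have h3 : 2 ≤ (M.E \ {u, v}).ncard := by
      have hd := Set.ncard_diff_add_ncard_of_subset hsub hEfin
      rw [Set.ncard_pair huv] at hd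
      omega
    have h4 := hMlam2 {u, v} hsub (by rw [Set.ncard_pair huv]) h3
    have h5 : NDP.rk M (M.E \ {u, v}) ≤ NDP.rk M M.E := NDP.rk_mono_s11 hEfin Set.diff_subset
    omega
  -- rank transfer to the deletion
  have hrkN : ∀ S : Set α, S ⊆ M.E \ {x} → NDP.rk (NDP.delete M {x}) S = NDP.rk M S :=
    fun S hS => NDP.rk_restrict M hS
  have hxclE : x ∈ M.closure (M.E \ {x}) :=
    M.closure_subset_closure (Set.diff_subset_diff_left hCE) hcl
  have hrkEx : NDP.rk M (M.E \ {x}) = NDP.rk M M.E := by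
    have h1 := NDP.rk_insert_of_mem_closure hEfin Set.diff_subset hxclE
    rw [Set.insert_diff_singleton, Set.insert_eq_self.mpr hxE] at h1
    exact h1.symm
  -- dual rank formula
  have hdual : ∀ W : Set α, W ⊆ M.E \ {x} →
      NDP.rk D W + NDP.rk M M.E = W.ncard + NDP.rk M ((M.E \ {x}) \ W) := by
    intro W hW
    have hG : (NDP.delete M {x}).E = M.E \ {x} := rfl
    have h := NDP.rk_dual_add (M := NDP.delete M {x})
      (hEfin.subset Set.diff_subset) (W := W) hW
    rw [hG, hrkN ((M.E \ {x}) \ W) Set.diff_subset, hrkN (M.E \ {x}) subset_rfl,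
      hrkEx, ← hD] at h
    exact h
  -- D is loopless
  have hDnl : ∀ e ∈ M.E \ {x}, D.Indep {e} := by
    intro e he
    by_contra hdep
    have h0 : NDP.rk D {e} = 0 := by
      refine Nat.le_zero.mp (NDP.rk_le fun I hI hIe => ?_)
      rcases Set.subset_singleton_iff_eq.mp hIe with rfl | rfl
      · simp
      · exact absurd hI hdep
    have h1 := hdual {e} (Set.singleton_subset_iff.mpr he)
    rw [h0, Set.ncard_singleton] at h1
    have hex : e ≠ x := fun h => he.2 (by simp [h])
    have hsub : ({e, x} : Set α) ⊆ M.E :=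
      Set.insert_subset he.1 (Set.singleton_subset_iff.mpr hxE)
    have hiden : M.E \ {e, x} = (M.E \ {x}) \ {e} := by
      ext a
      constructor
      · rintro ⟨haE, hna⟩
        exact ⟨⟨haE, fun h => hna (Or.inr h)⟩, fun h => hna (Or.inl h)⟩
      · rintro ⟨⟨haE, hnx⟩, hne⟩
        refine ⟨haE, ?_⟩
        rintro (h | h)
        · exact hne h
        · exact hnx h
    have hsz : 2 ≤ (M.E \ {e, x}).ncard := by
      have hd := Set.ncard_diff_add_ncard_of_subset hsub hEfin
      rw [Set.ncard_pair hex] at hd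
      omega
    have h2 := hMlam2 {e, x} hsub (by rw [Set.ncard_pair hex]) hsz
    have h3 : NDP.rk M {e, x} ≤ 2 := by
      have h := NDP.rk_le_ncard_s11 hEfin (hEfin.subset hsub)
      rwa [Set.ncard_pair hex] at h
    rw [hiden] at h2
    omega
  -- every element of the ground set of D is parallel (in D) to a member of X
  have hrep : ∀ e ∈ M.E \ {x}, ∃ f ∈ X, e ∈ D.closure {f} := by
    intro e he
    obtain ⟨f, hfX, hfcl⟩ := hX.2.2.1 e he (hDnl e he)
    by_cases hef : f = e
    · exact ⟨f, hfX, by rw [hef]; exact D.mem_closure_self e he⟩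
    · have hfE : f ∈ D.E := hXD hfX
      have hfnl : f ∉ D.closure ∅ := by
        rw [(D.empty_indep).notMem_closure_iff hfE]
        exact ⟨by simpa using hX.2.1 f hfX, by simp⟩
      refine ⟨f, hfX, ?_⟩
      have hx2 : f ∈ D.closure (insert e ∅) \ D.closure ∅ := ⟨by simpa using hfcl, hfnl⟩
      have h3 := Matroid.closure_exchange hx2
      simpa using h3.1
  have hspan : D.E ⊆ D.closure X := fun e he => by
    obtain ⟨f, hfX, hecl⟩ := hrep e he
    exact D.closure_subset_closure (Set.singleton_subset_iff.mpr hfX) hecl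
  -- the lift of the separation
  obtain ⟨⟨hYP, hYlam⟩, hYc1, hYc2⟩ := hY
  rw [hPE] at hYc2
  have hYX : Y ⊆ X := hYP
  set A : Set α := {e ∈ M.E \ {x} | ∃ y ∈ Y, e ∈ D.closure {y}} with hA_def
  set B : Set α := (M.E \ {x}) \ A with hB_def
  have hAE : A ⊆ M.E \ {x} := Set.sep_subset _ _
  have hBE : B ⊆ M.E \ {x} := Set.diff_subset
  have hfinA : A.Finite := hEfin.subset (hAE.trans Set.diff_subset)
  have hfinB : B.Finite := hEfin.subset (hBE.trans Set.diff_subset)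
  have hYA : Y ⊆ A := by
    intro y hy
    rw [hA_def]
    exact Set.mem_sep (hXD (hYX hy)) ⟨y, hy, D.mem_closure_self y (hXD (hYX hy))⟩
  have hZB : X \ Y ⊆ B := by
    rintro z ⟨hzX, hzY⟩
    rw [hB_def]
    refine ⟨hXD hzX, fun hzA => hzY ?_⟩
    obtain ⟨-, y, hyY, hzcl⟩ := hzA
    have h := hX.2.2.2 z hzX y (hYX hyY) hzcl
    rwa [h]
  have hAcl : A ⊆ D.closure Y := by
    rintro e ⟨-, y, hyY, hecl⟩
    exact D.closure_subset_closure (Set.singleton_subset_iff.mpr hyY) hecl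
  have hBcl : B ⊆ D.closure (X \ Y) := by
    rintro e ⟨heE, heA⟩
    obtain ⟨f, hfX, hecl⟩ := hrep e heE
    have hfY : f ∉ Y := fun hfY =>
      heA (by rw [hA_def]; exact Set.mem_sep heE ⟨f, hfY, hecl⟩)
    exact D.closure_subset_closure
      (Set.singleton_subset_iff.mpr (⟨hfX, hfY⟩ : f ∈ X \ Y)) hecl
  have hYsub : Y ⊆ D.E := fun y hy => hXD (hYX hy)
  have hrkDA : NDP.rk D A = NDP.rk D Y := NDP.rk_sandwich hDEfin hYsub hYA hAcl
  have hrkDB : NDP.rk D B = NDP.rk D (X \ Y) :=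
    NDP.rk_sandwich hDEfin (fun z hz => hXD hz.1) hZB hBcl
  have hrkDE : NDP.rk D D.E = NDP.rk D X := NDP.rk_sandwich hDEfin hXD hXD hspan
  have hrkP : ∀ S : Set α, S ⊆ X → NDP.rk P S = NDP.rk D S := by
    intro S hS
    rw [hP, hD]
    exact NDP.rk_restrict _ hS
  -- the dual-formula instances
  have dA := hdual A hAE
  have dB := hdual B hBE
  have dE := hdual (M.E \ {x}) subset_rfl
  have iAB : (M.E \ {x}) \ A = B := hB_def.symm
  have iBA : (M.E \ {x}) \ B = A := by rw [hB_def]; exact Set.diff_diff_cancel_left hAE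
  rw [iAB] at dA
  rw [iBA] at dB
  rw [Set.diff_self, NDP.rk_empty] at dE
  have hDE' : NDP.rk D D.E = NDP.rk D (M.E \ {x}) := rfl
  have cAB : A.ncard + B.ncard = (M.E \ {x}).ncard := by
    have h1 := Set.ncard_diff_add_ncard_of_subset hAE (hEfin.subset Set.diff_subset)
    rw [iAB] at h1
    omega
  -- the connectivity bound transferred to M
  have hlamM : NDP.rk M A + NDP.rk M B + 1 ≤ k + NDP.rk M M.E := by
    unfold NDP.lam at hYlam
    rw [hPE, hrkP Y hYX, hrkP (X \ Y) Set.diff_subset, hrkP X subset_rfl,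
      ← hrkDA, ← hrkDB, ← hrkDE, hDE'] at hYlam
    omega
  have hsizeA : k ≤ A.ncard := le_trans hYc1 (Set.ncard_le_ncard hYA hfinA)
  have hsizeB : k ≤ B.ncard := le_trans hYc2 (Set.ncard_le_ncard hZB hfinB)
  interval_cases k
  -- k = 0
  · have hunion : A ∪ B = M.E \ {x} := by rw [hB_def]; exact Set.union_diff_cancel hAE
    have h1 := NDP.rk_union_le hEfin A B
    rw [hunion, hrkEx] at h1
    omega
  -- k = 1
  · have hyne : Y.Nonempty := by
      rcases Y.eq_empty_or_nonempty with h | h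
      · rw [h] at hYc1; simp at hYc1
      · exact h
    obtain ⟨y1, hy1⟩ := hyne
    have hzne : (X \ Y).Nonempty := by
      rcases (X \ Y).eq_empty_or_nonempty with h | h
      · rw [h] at hYc2; simp at hYc2
      · exact h
    obtain ⟨z1, hz1⟩ := hzne
    have hDy : 1 ≤ NDP.rk D A := by
      have h1 : D.Indep {y1} := hX.2.1 y1 (hYX hy1)
      have h2 := NDP.ncard_le_rk_s11 hDEfin h1 (Set.singleton_subset_iff.mpr (hYA hy1))
      simpa using h2
    have hDz : 1 ≤ NDP.rk D B := by
      have h1 : D.Indep {z1} := hX.2.1 z1 hz1.1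
      have h2 := NDP.ncard_le_rk_s11 hDEfin h1 (Set.singleton_subset_iff.mpr (hZB hz1))
      simpa using h2
    by_cases hA2 : 2 ≤ A.ncard
    · by_cases hB2 : 2 ≤ B.ncard
      · have hidenA : M.E \ A = insert x B := by
          rw [hB_def]
          ext e
          constructor
          · rintro ⟨heE, hnA⟩
            by_cases hex : e = x
            · exact Or.inl hex
            · exact Or.inr ⟨⟨heE, hex⟩, hnA⟩
          · rintro (rfl | ⟨⟨heE, hnx⟩, hnA⟩)
            · exact ⟨hxE, fun h => (hAE h).2 rfl⟩
            · exact ⟨heE, hnA⟩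
        have hxB : x ∉ B := fun h => (hBE h).2 rfl
        have hcard : 2 ≤ (M.E \ A).ncard := by
          rw [hidenA, Set.ncard_insert_of_notMem hxB hfinB]
          omega
        have h2 := hMlam2 A (hAE.trans Set.diff_subset) hA2 hcard
        rw [hidenA] at h2
        have h3 : NDP.rk M (insert x B) ≤ NDP.rk M B + 1 := NDP.rk_insert_le hEfin x
        omega
      · have hz1E : z1 ∈ M.E := hXE hz1.1
        have h4 : 1 ≤ NDP.rk M B := by
          rw [← hnoloop z1 hz1E]
          exact NDP.rk_mono_s11 hEfin (Set.singleton_subset_iff.mpr (hZB hz1))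
        have h5 : 1 ≤ B.ncard := hsizeB
        push_neg at hB2
        omega
    · push_neg at hA2
      have hy1E : y1 ∈ M.E := hXE (hYX hy1)
      have h4 : 1 ≤ NDP.rk M A := by
        rw [← hnoloop y1 hy1E]
        exact NDP.rk_mono_s11 hEfin (Set.singleton_subset_iff.mpr (hYA hy1))
      omega
  -- k = 2
  · have hfinY : Y.Finite := hfinA.subset hYA
    have hfinZ : (X \ Y).Finite := hfinB.subset hZB
    obtain ⟨y1, y2, hy1, hy2, hy12⟩ := (Set.one_lt_ncard_iff hfinY).mp (by omega)
    obtain ⟨z1, z2, hz1, hz2, hz12⟩ := (Set.one_lt_ncard_iff hfinZ).mp (by omega)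
    have hDpair2 : ∀ u ∈ X, ∀ v ∈ X, u ≠ v → 2 ≤ NDP.rk D {u, v} := by
      intro u hu v hv huv
      have h2 : D.Indep {v} := hX.2.1 v hv
      have h3 : u ∉ D.closure {v} := fun hmem => huv (hX.2.2.2 u hu v hv hmem)
      have h4 : u ∉ ({v} : Set α) := by simpa using huv
      have h5 : D.Indep (insert u {v}) :=
        (h2.insert_indep_iff_of_notMem h4).mpr ⟨hXD hu, h3⟩
      have h6 := NDP.ncard_le_rk_s11 hDEfin h5 subset_rfl
      rwa [Set.ncard_pair huv] at h6
    have hDA2 : 2 ≤ NDP.rk D A :=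
      le_trans (hDpair2 y1 (hYX hy1) y2 (hYX hy2) hy12)
        (NDP.rk_mono_s11 hDEfin
          (Set.insert_subset (hYA hy1) (Set.singleton_subset_iff.mpr (hYA hy2))))
    have hDB2 : 2 ≤ NDP.rk D B :=
      le_trans (hDpair2 z1 hz1.1 z2 hz2.1 hz12)
        (NDP.rk_mono_s11 hDEfin
          (Set.insert_subset (hZB hz1) (Set.singleton_subset_iff.mpr (hZB hz2))))
    -- exactness of the 2-separation and x outside both closures
    have hxA : x ∉ A := fun h => (hAE h).2 rfl
    have hxB : x ∉ B := fun h => (hBE h).2 rfl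
    have hidenA : M.E \ insert x A = B := by
      rw [hB_def]
      ext e
      constructor
      · rintro ⟨heE, hne⟩
        have hnx : e ≠ x := fun h => hne (Or.inl h)
        have hnA : e ∉ A := fun h => hne (Or.inr h)
        exact ⟨⟨heE, hnx⟩, hnA⟩
      · rintro ⟨⟨heE, hnx⟩, hnA⟩
        refine ⟨heE, ?_⟩
        rintro (h | h)
        · exact hnx h
        · exact hnA h
    have hidenB : M.E \ insert x B = A := by
      ext e
      constructor
      · rintro ⟨heE, hne⟩
        have hnx : e ≠ x := fun h => hne (Or.inl h)
        have hnB : e ∉ B := fun h => hne (Or.inr h)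
        by_contra hnA
        exact hnB (by rw [hB_def]; exact ⟨⟨heE, hnx⟩, hnA⟩)
      · intro heA
        have h1 : e ∈ M.E \ {x} := hAE heA
        refine ⟨h1.1, ?_⟩
        rintro (h | h)
        · exact h1.2 h
        · rw [hB_def] at h
          exact h.2 heA
    have hsAi : 2 ≤ (insert x A).ncard := by
      rw [Set.ncard_insert_of_notMem hxA hfinA]
      omega
    have hsBi : 2 ≤ (insert x B).ncard := by
      rw [Set.ncard_insert_of_notMem hxB hfinB]
      omega
    have h2A := hMlam2 (insert x A)
      (Set.insert_subset hxE (hAE.trans Set.diff_subset)) hsAi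
      (by rw [hidenA]; exact hsizeB)
    rw [hidenA] at h2A
    have h3A : NDP.rk M (insert x A) ≤ NDP.rk M A + 1 := NDP.rk_insert_le hEfin x
    have h2B := hMlam2 (insert x B)
      (Set.insert_subset hxE (hBE.trans Set.diff_subset)) hsBi
      (by rw [hidenB]; exact hsizeA)
    rw [hidenB] at h2B
    have h3B : NDP.rk M (insert x B) ≤ NDP.rk M B + 1 := NDP.rk_insert_le hEfin x
    have hexact : NDP.rk M A + NDP.rk M B = NDP.rk M M.E + 1 := by omega
    have hinsA : NDP.rk M (insert x A) = NDP.rk M A + 1 := by omega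
    have hinsB : NDP.rk M (insert x B) = NDP.rk M B + 1 := by omega
    have hxclA : x ∉ M.closure A := fun hmem => by
      have h := NDP.rk_insert_of_mem_closure hEfin (hAE.trans Set.diff_subset) hmem
      omega
    have hxclB : x ∉ M.closure B := fun hmem => by
      have h := NDP.rk_insert_of_mem_closure hEfin (hBE.trans Set.diff_subset) hmem
      omega
    have hdepA : NDP.rk M A + 1 ≤ A.ncard := by omega
    have hdepB : NDP.rk M B + 1 ≤ B.ncard := by omega
    -- the rank-3 cocircuit
    set Cx : Set α := C \ {x} with hCx_def
    have hCxE : Cx ⊆ M.E \ {x} := Set.diff_subset_diff_left hCE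
    have hCeq : insert x Cx = C := by
      rw [hCx_def, Set.insert_diff_singleton, Set.insert_eq_self.mpr hx]
    have hrkCx : NDP.rk M Cx = 3 := by
      have h1 : NDP.rk M Cx ≤ NDP.rk M C := NDP.rk_mono_s11 hEfin Set.diff_subset
      have h2 : NDP.rk M C ≤ NDP.rk M Cx := by
        refine NDP.rk_le_of_subset_closure hEfin (hCxE.trans Set.diff_subset) ?_
        rw [← hCeq]
        exact Set.insert_subset hcl (M.subset_closure Cx (hCxE.trans Set.diff_subset))
      omega
    have hCxAB : Cx ⊆ A ∪ B := by
      intro e he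
      by_cases heA : e ∈ A
      · exact Or.inl heA
      · refine Or.inr ?_
        rw [hB_def]
        exact ⟨hCxE he, heA⟩
    have hCACB : (A ∩ Cx) ∪ (B ∩ Cx) = Cx := by
      ext e
      constructor
      · rintro (h | h) <;> exact h.2
      · intro he
        rcases hCxAB he with h | h
        · exact Or.inl ⟨h, he⟩
        · exact Or.inr ⟨h, he⟩
    have hCAne : (A ∩ Cx).Nonempty := by
      rw [Set.nonempty_iff_ne_empty]
      intro hempty
      have hCxB : Cx ⊆ B := by
        intro e he
        rcases hCxAB he with h | h
        · exact absurd (hempty ▸ (⟨h, he⟩ : e ∈ A ∩ Cx)) (Set.notMem_empty e)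
        · exact h
      exact hxclB (M.closure_subset_closure hCxB hcl)
    have hCBne : (B ∩ Cx).Nonempty := by
      rw [Set.nonempty_iff_ne_empty]
      intro hempty
      have hCxA : Cx ⊆ A := by
        intro e he
        rcases hCxAB he with h | h
        · exact h
        · exact absurd (hempty ▸ (⟨h, he⟩ : e ∈ B ∩ Cx)) (Set.notMem_empty e)
      exact hxclA (M.closure_subset_closure hCxA hcl)
    have hCAle : NDP.rk M (A ∩ Cx) ≤ 2 := by
      by_contra hgt
      push_neg at hgt
      have hle3 : NDP.rk M (A ∩ Cx) ≤ 3 := by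
        rw [← hrkCx]
        exact NDP.rk_mono_s11 hEfin Set.inter_subset_right
      obtain ⟨J, hJ⟩ := M.exists_isBasis (A ∩ Cx)
        (Set.inter_subset_left.trans (hAE.trans Set.diff_subset))
      have hJcard : NDP.rk M (A ∩ Cx) = J.ncard := NDP.rk_eq_of_basis hEfin hJ
      have hspan2 : Cx ⊆ M.closure J := by
        refine NDP.subset_closure_of_rk_le hEfin hJ.indep
          (hJ.subset.trans Set.inter_subset_right) (hCxE.trans Set.diff_subset) ?_
        omega
      have hxJ : x ∈ M.closure J := (M.closure_subset_closure_of_subset_closure hspan2) hcl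
      exact hxclA (M.closure_subset_closure (hJ.subset.trans Set.inter_subset_left) hxJ)
    have hCBle : NDP.rk M (B ∩ Cx) ≤ 2 := by
      by_contra hgt
      push_neg at hgt
      have hle3 : NDP.rk M (B ∩ Cx) ≤ 3 := by
        rw [← hrkCx]
        exact NDP.rk_mono_s11 hEfin Set.inter_subset_right
      obtain ⟨J, hJ⟩ := M.exists_isBasis (B ∩ Cx)
        (Set.inter_subset_left.trans (hBE.trans Set.diff_subset))
      have hJcard : NDP.rk M (B ∩ Cx) = J.ncard := NDP.rk_eq_of_basis hEfin hJ
      have hspan2 : Cx ⊆ M.closure J := by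
        refine NDP.subset_closure_of_rk_le hEfin hJ.indep
          (hJ.subset.trans Set.inter_subset_right) (hCxE.trans Set.diff_subset) ?_
        omega
      have hxJ : x ∈ M.closure J := (M.closure_subset_closure_of_subset_closure hspan2) hcl
      exact hxclB (M.closure_subset_closure (hJ.subset.trans Set.inter_subset_left) hxJ)
    have hCsum : 3 ≤ NDP.rk M (A ∩ Cx) + NDP.rk M (B ∩ Cx) := by
      have h := NDP.rk_union_le hEfin (A ∩ Cx) (B ∩ Cx)
      rw [hCACB, hrkCx] at h
      exact h
    -- cocircuit coindependence facts
    have hHS : ∀ S : Set α, S ⊆ C → S.Nonempty →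
        NDP.rk M ((M.E \ C) ∪ S) = NDP.rk M M.E := by
      rintro S hS ⟨s, hsS⟩
      have hproper : C \ S ⊂ C := ⟨Set.diff_subset, fun hsub => (hsub (hS hsS)).2 hsS⟩
      have hco : M✶.Indep (C \ S) := hC.2.2 _ hproper
      obtain ⟨hCSE, B', hB', hdisj⟩ := Matroid.dual_indep_iff_exists'.mp hco
      have hB'sub : B' ⊆ (M.E \ C) ∪ S := by
        intro e he
        have heE : e ∈ M.E := hB'.subset_ground he
        by_cases heC : e ∈ C
        · by_cases heS : e ∈ S
          · exact Or.inr heS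
          · exact absurd he (Set.disjoint_left.mp hdisj ⟨heC, heS⟩)
        · exact Or.inl ⟨heE, heC⟩
      have h1 : NDP.rk M M.E = B'.ncard :=
        NDP.rk_eq_of_basis hEfin (Matroid.isBasis_ground_iff.mpr hB')
      have h2 : B'.ncard ≤ NDP.rk M ((M.E \ C) ∪ S) :=
        NDP.ncard_le_rk_s11 hEfin hB'.indep hB'sub
      have h3 : NDP.rk M ((M.E \ C) ∪ S) ≤ NDP.rk M M.E :=
        NDP.rk_mono_s11 hEfin (Set.union_subset Set.diff_subset (hS.trans hCE))
      omega
    have hHrk : NDP.rk M (M.E \ C) + 1 = NDP.rk M M.E := by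
      have hx1 : NDP.rk M ((M.E \ C) ∪ {x}) = NDP.rk M M.E :=
        hHS {x} (Set.singleton_subset_iff.mpr hx) ⟨x, rfl⟩
      have hle : NDP.rk M ((M.E \ C) ∪ {x}) ≤ NDP.rk M (M.E \ C) + 1 := by
        rw [Set.union_singleton]
        exact NDP.rk_insert_le hEfin x
      have hne : NDP.rk M (M.E \ C) ≠ NDP.rk M M.E := by
        intro heq
        obtain ⟨J, hJ⟩ := M.exists_isBasis (M.E \ C) Set.diff_subset
        obtain ⟨B', hB', hJB'⟩ := hJ.indep.exists_isBase_superset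
        have hcardJ : NDP.rk M (M.E \ C) = J.ncard := NDP.rk_eq_of_basis hEfin hJ
        have hcardB : NDP.rk M M.E = B'.ncard :=
          NDP.rk_eq_of_basis hEfin (Matroid.isBasis_ground_iff.mpr hB')
        have hJB : J = B' :=
          Set.eq_of_subset_of_ncard_le hJB' (by omega) (hEfin.subset hB'.subset_ground)
        refine hC.2.1 (Matroid.dual_indep_iff_exists'.mpr ⟨hCE, J, ?_, ?_⟩)
        · rw [hJB]; exact hB'
        · rw [Set.disjoint_left]
          intro a haC haJ
          exact (hJ.subset haJ).2 haC
      have hle2 : NDP.rk M (M.E \ C) ≤ NDP.rk M M.E := NDP.rk_mono_s11 hEfin Set.diff_subset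
      omega
    have hCeq' : M.E \ C = M.E \ insert x Cx := by rw [hCeq]
    have hHCA : NDP.rk M ((M.E \ insert x Cx) ∪ (A ∩ Cx)) = NDP.rk M M.E := by
      rw [← hCeq']
      exact hHS _ (Set.inter_subset_right.trans (hCx_def ▸ Set.diff_subset)) hCAne
    have hHCB : NDP.rk M ((M.E \ insert x Cx) ∪ (B ∩ Cx)) = NDP.rk M M.E := by
      rw [← hCeq']
      exact hHS _ (Set.inter_subset_right.trans (hCx_def ▸ Set.diff_subset)) hCBne
    have hHrk' : NDP.rk M (M.E \ insert x Cx) + 1 = NDP.rk M M.E := by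
      rw [← hCeq']
      exact hHrk
    have hAne : A.Nonempty := ⟨y1, hYA hy1⟩
    have hBne : B.Nonempty := ⟨z1, hZB hz1⟩
    have hrkA2 : 2 ≤ NDP.rk M A := by
      rw [← hpair y1 (hXE (hYX hy1)) y2 (hXE (hYX hy2)) hy12]
      exact NDP.rk_mono_s11 hEfin
        (Set.insert_subset (hYA hy1) (Set.singleton_subset_iff.mpr (hYA hy2)))
    have hrkB2 : 2 ≤ NDP.rk M B := by
      rw [← hpair z1 (hXE hz1.1) z2 (hXE hz2.1) hz12]
      exact NDP.rk_mono_s11 hEfin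
        (Set.insert_subset (hZB hz1) (Set.singleton_subset_iff.mpr (hZB hz2)))
    have hCAge1 : 1 ≤ NDP.rk M (A ∩ Cx) := by
      obtain ⟨u, hu⟩ := hCAne
      rw [← hnoloop u (hAE hu.1).1]
      exact NDP.rk_mono_s11 hEfin (Set.singleton_subset_iff.mpr hu)
    have hCBge1 : 1 ≤ NDP.rk M (B ∩ Cx) := by
      obtain ⟨u, hu⟩ := hCBne
      rw [← hnoloop u (hBE hu.1).1]
      exact NDP.rk_mono_s11 hEfin (Set.singleton_subset_iff.mpr hu)
    -- final case analysis
    by_cases hCB2 : NDP.rk M (B ∩ Cx) = 2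
    · by_cases hA12 : 2 ≤ (A \ Cx).ncard
      · exact NDP.core_chain hEfin hxE hAE hB_def hCxE hMlam2 hcl hrkCx hCB2 hA12
          hexact hBne hCAne hHCA hHrk'
      · push_neg at hA12
        by_cases hCA2 : NDP.rk M (A ∩ Cx) = 2
        · have hHsub : M.E \ insert x Cx ⊆ (A \ Cx) ∪ (B \ Cx) := by
            intro e he
            have hnx : e ≠ x := fun h => he.2 (by rw [h]; exact Set.mem_insert x Cx)
            have hnC : e ∉ Cx := fun h => he.2 (Set.mem_insert_of_mem _ h)
            by_cases heA : e ∈ A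
            · exact Or.inl ⟨heA, hnC⟩
            · refine Or.inr ⟨?_, hnC⟩
              rw [hB_def]
              exact ⟨⟨he.1, hnx⟩, heA⟩
          have hHcard : 3 ≤ (M.E \ insert x Cx).ncard := by
            have h1 := NDP.rk_le_ncard_s11 (M := M) (X := M.E \ insert x Cx) hEfin
              (hEfin.subset Set.diff_subset)
            omega
          have hB12 : 2 ≤ (B \ Cx).ncard := by
            have h1 := Set.ncard_union_le (A \ Cx) (B \ Cx)
            have h2 := Set.ncard_le_ncard hHsub
              ((hfinA.diff (t := Cx)).union (hfinB.diff (t := Cx)))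
            omega
          exact NDP.core_chain hEfin hxE hBE iBA.symm hCxE hMlam2 hcl hrkCx hCA2 hB12
            (by omega) hAne hCBne hHCB hHrk'
        · have hCA1 : NDP.rk M (A ∩ Cx) = 1 := by omega
          have hcardCA : (A ∩ Cx).ncard ≤ 1 :=
            NDP.card_le_one_of_rk_le_one hEfin hpair
              (Set.inter_subset_left.trans (hAE.trans Set.diff_subset)) (by omega)
          have hcards := Set.ncard_inter_add_ncard_diff_eq_ncard A Cx hfinA
          omega
    · have hCB1 : NDP.rk M (B ∩ Cx) = 1 := by omega
      have hCA2 : NDP.rk M (A ∩ Cx) = 2 := by omega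
      by_cases hB12 : 2 ≤ (B \ Cx).ncard
      · exact NDP.core_chain hEfin hxE hBE iBA.symm hCxE hMlam2 hcl hrkCx hCA2 hB12
          (by omega) hAne hCBne hHCB hHrk'
      · push_neg at hB12
        have hcardCB : (B ∩ Cx).ncard ≤ 1 :=
          NDP.card_le_one_of_rk_le_one hEfin hpair
            (Set.inter_subset_left.trans (hBE.trans Set.diff_subset)) (by omega)
        have hcards := Set.ncard_inter_add_ncard_diff_eq_ncard B Cx hfinB
        omega
end
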